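/- arXiv:2302.04392 — 6 statements merged into one kernel-verified Lean document; each statement's English description precedes it below -/
import Mathlib

section
/- Let ϑ ∈ [0,∞) and γ₀, γ₁ ∈ (−∞, 1). Then there exists a constant C = C(ϑ, γ₀, γ₁) > 0 such that for all λ > 0 and t > 0, ∫₀ᵗ min((λ(t−s))^{−ϑ}, 1) · (min(s,1))^{−γ₀} · (max(s,1))^{−γ₁} ds ≤ C · ℓ_ϑ(λt) · (min(t,1))^{1−γ₀} · (max(t,1))^{1−γ₁}. -/
open MeasureTheory
open scoped ENNReal

/-- The function `ℓ_ϑ(r) = (max r 1)^{-min(ϑ,1)} (1 + 𝟙_{ϑ=1} log(max r 1))`. -/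
noncomputable def ell (ϑ r : ℝ) : ℝ :=
  (max r 1) ^ (-(min ϑ 1)) * (1 + (if ϑ = 1 then (1 : ℝ) else 0) * Real.log (max r 1))

open Real Set intervalIntegral

namespace Stmt2Aux

lemma one_le_E (ϑ r : ℝ) :
    (1 : ℝ) ≤ 1 + (if ϑ = 1 then (1 : ℝ) else 0) * Real.log (max r 1) := by
  have h1 : (0:ℝ) ≤ Real.log (max r 1) := Real.log_nonneg (le_max_right _ _)
  split_ifs <;> nlinarith

lemma ell_nonneg (ϑ r : ℝ) : 0 ≤ ell ϑ r := by
  unfold ell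
  have h2 : (0:ℝ) ≤ (max r 1) ^ (-(min ϑ 1)) :=
    Real.rpow_nonneg (le_trans zero_le_one (le_max_right r 1)) _
  exact mul_nonneg h2 (le_trans zero_le_one (one_le_E ϑ r))

lemma measurable_rpow_const (c : ℝ) : Measurable fun x : ℝ => x ^ c :=
  measurable_of_continuousOn_compl_singleton 0
    (ContinuousOn.rpow_const continuousOn_id (fun x hx => Or.inl hx))

lemma integrableOn_of_meas_bdd {f : ℝ → ℝ} {s : Set ℝ} (hm : Measurable f)
    (hs : MeasurableSet s) (hμ : volume s < ⊤) (hb : ∀ x ∈ s, |f x| ≤ 1) :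
    IntegrableOn f s := by
  refine Integrable.mono' (g := fun _ => (1:ℝ)) (integrableOn_const hμ.ne)
    hm.aestronglyMeasurable ?_
  exact (ae_restrict_iff' hs).2 (Filter.Eventually.of_forall fun x hx => by
    simpa [Real.norm_eq_abs] using hb x hx)

lemma ker_abs_le {ϑ x : ℝ} (hx : 0 ≤ x) : |min (x ^ (-ϑ)) 1| ≤ 1 := by
  have h0 : 0 ≤ min (x ^ (-ϑ)) 1 := le_min (Real.rpow_nonneg hx _) zero_le_one
  rw [abs_of_nonneg h0]
  exact min_le_right _ _

lemma meas_ker_comp {g : ℝ → ℝ} (hg : Measurable g) (ϑ : ℝ) :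
    Measurable fun s : ℝ => min ((g s) ^ (-ϑ)) 1 :=
  (((measurable_rpow_const (-ϑ)).comp hg).min measurable_const)

lemma ker_intInt (ϑ : ℝ) {a b : ℝ} (ha : 0 ≤ a) (hb : 0 ≤ b) :
    IntervalIntegrable (fun v : ℝ => min (v ^ (-ϑ)) 1) volume a b := by
  constructor
  · exact integrableOn_of_meas_bdd (meas_ker_comp measurable_id ϑ) measurableSet_Ioc
      measure_Ioc_lt_top (fun x hx => ker_abs_le (le_trans ha hx.1.le))
  · exact integrableOn_of_meas_bdd (meas_ker_comp measurable_id ϑ) measurableSet_Ioc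
      measure_Ioc_lt_top (fun x hx => ker_abs_le (le_trans hb hx.1.le))

lemma lemA_small (ϑ : ℝ) {R : ℝ} (hR0 : 0 < R) (hR : R ≤ 1) :
    (∫ v in (0:ℝ)..R, min (v ^ (-ϑ)) 1) ≤ R * ell ϑ R := by
  have hell : ell ϑ R = 1 := by
    unfold ell
    rw [max_eq_right hR]
    simp
  rw [hell, mul_one]
  calc (∫ v in (0:ℝ)..R, min (v ^ (-ϑ)) 1)
      ≤ ∫ _ in (0:ℝ)..R, (1:ℝ) := by
        apply integral_mono_on hR0.le (ker_intInt ϑ le_rfl hR0.le)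
          intervalIntegrable_const
        intro x _
        exact min_le_right _ _
    _ = R := by simp

lemma lemA_one (ϑ : ℝ) :
    (∫ v in (0:ℝ)..1, min (v ^ (-ϑ)) 1) ≤ 1 := by
  calc (∫ v in (0:ℝ)..1, min (v ^ (-ϑ)) 1)
      ≤ ∫ _ in (0:ℝ)..1, (1:ℝ) := by
        apply integral_mono_on zero_le_one (ker_intInt ϑ le_rfl zero_le_one)
          intervalIntegrable_const
        intro x _
        exact min_le_right _ _
    _ = 1 := by simp

lemma lemA_split (ϑ : ℝ) {R : ℝ} (hR : 1 < R)
    (hint : IntervalIntegrable (fun v : ℝ => v ^ (-ϑ)) volume 1 R) :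
    (∫ v in (0:ℝ)..R, min (v ^ (-ϑ)) 1) ≤ 1 + ∫ v in (1:ℝ)..R, v ^ (-ϑ) := by
  have hsplit : (∫ v in (0:ℝ)..1, min (v ^ (-ϑ)) 1) + (∫ v in (1:ℝ)..R, min (v ^ (-ϑ)) 1)
      = ∫ v in (0:ℝ)..R, min (v ^ (-ϑ)) 1 :=
    integral_add_adjacent_intervals (ker_intInt ϑ le_rfl zero_le_one)
      (ker_intInt ϑ zero_le_one (by linarith))
  rw [← hsplit]
  have h2 : (∫ v in (1:ℝ)..R, min (v ^ (-ϑ)) 1) ≤ ∫ v in (1:ℝ)..R, v ^ (-ϑ) := by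
    apply integral_mono_on hR.le (ker_intInt ϑ zero_le_one (by linarith)) hint
    intro x _
    exact min_le_left _ _
  have h1 := lemA_one ϑ
  linarith

lemma lemA (ϑ : ℝ) (hϑ : 0 ≤ ϑ) :
    ∃ c : ℝ, 0 < c ∧ ∀ R : ℝ, 0 < R →
      (∫ v in (0:ℝ)..R, min (v ^ (-ϑ)) 1) ≤ c * (R * ell ϑ R) := by
  rcases lt_trichotomy ϑ 1 with hlt | heq | hgt
  · have h1ϑ : (0:ℝ) < 1 - ϑ := by linarith
    refine ⟨1 + 1/(1-ϑ), by positivity, fun R hR0 => ?_⟩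
    rcases le_or_gt R 1 with hR | hR
    · have h := lemA_small ϑ hR0 hR
      have hRe : 0 ≤ R * ell ϑ R := mul_nonneg hR0.le (ell_nonneg _ _)
      nlinarith [one_div_pos.mpr h1ϑ]
    · have hint : IntervalIntegrable (fun v : ℝ => v ^ (-ϑ)) volume 1 R :=
        intervalIntegrable_rpow' (by linarith)
      have h := lemA_split ϑ hR hint
      have hval : (∫ v in (1:ℝ)..R, v ^ (-ϑ)) = (R ^ (-ϑ+1) - 1)/(-ϑ+1) := by
        rw [integral_rpow (Or.inl (by linarith))]
        norm_num
      have hell : ell ϑ R = R ^ (-ϑ) := by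
        unfold ell
        rw [max_eq_left hR.le, min_eq_left hlt.le, if_neg (ne_of_lt hlt)]
        simp
      have hRR : R * R ^ (-ϑ) = R ^ (-ϑ+1) := by
        rw [Real.rpow_add hR0, Real.rpow_one]; ring
      have hA : (1:ℝ) ≤ R ^ (-ϑ+1) := Real.one_le_rpow hR.le (by linarith)
      have hD : (0:ℝ) < (1-ϑ)⁻¹ := by positivity
      have e2 : (R ^ (-ϑ+1) - 1)/(-ϑ+1) = (R ^ (-ϑ+1) - 1)*(1-ϑ)⁻¹ := by
        rw [div_eq_mul_inv]
        congr 2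
        ring
      rw [hell, hRR, one_div]
      rw [hval, e2] at h
      nlinarith [mul_nonneg (sub_nonneg.mpr hA) hD.le]
  · subst heq
    refine ⟨1, one_pos, fun R hR0 => ?_⟩
    rcases le_or_gt R 1 with hR | hR
    · simpa using lemA_small 1 hR0 hR
    · have hint : IntervalIntegrable (fun v : ℝ => v ^ (-1:ℝ)) volume 1 R := by
        apply intervalIntegrable_rpow (Or.inr ?_)
        rw [Set.uIcc_of_le hR.le]
        intro h; exact absurd h.1 (by norm_num)
      have h := lemA_split 1 hR hint
      have hval : (∫ v in (1:ℝ)..R, v ^ (-1:ℝ)) = Real.log R := by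
        have e : ∀ v : ℝ, v ^ (-1:ℝ) = v⁻¹ := fun v => Real.rpow_neg_one v
        simp_rw [e]
        rw [integral_inv_of_pos one_pos hR0]
        simp
      have hell : ell 1 R = R ^ (-1:ℝ) * (1 + Real.log R) := by
        unfold ell
        rw [max_eq_left hR.le, if_pos rfl]
        simp
      have hRR : R * (R ^ (-1:ℝ) * (1 + Real.log R)) = 1 + Real.log R := by
        rw [Real.rpow_neg_one]
        field_simp
      rw [hell, one_mul, hRR]
      rw [hval] at h
      exact h
  · have h1ϑ : (0:ℝ) < ϑ - 1 := by linarith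
    refine ⟨1 + 1/(ϑ-1), by positivity, fun R hR0 => ?_⟩
    rcases le_or_gt R 1 with hR | hR
    · have h := lemA_small ϑ hR0 hR
      have hRe : 0 ≤ R * ell ϑ R := mul_nonneg hR0.le (ell_nonneg _ _)
      nlinarith [one_div_pos.mpr h1ϑ]
    · have hint : IntervalIntegrable (fun v : ℝ => v ^ (-ϑ)) volume 1 R := by
        apply intervalIntegrable_rpow (Or.inr ?_)
        rw [Set.uIcc_of_le hR.le]
        intro h; exact absurd h.1 (by norm_num)
      have h := lemA_split ϑ hR hint
      have hval : (∫ v in (1:ℝ)..R, v ^ (-ϑ)) = (R ^ (-ϑ+1) - 1)/(-ϑ+1) := by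
        rw [integral_rpow (Or.inr ⟨by intro hc; exact absurd (neg_injective hc) (by norm_num; linarith),
          by rw [Set.uIcc_of_le hR.le]; intro hc; exact absurd hc.1 (by norm_num)⟩)]
        norm_num
      have hell : ell ϑ R = R ^ (-1:ℝ) := by
        unfold ell
        rw [max_eq_left hR.le, min_eq_right (le_of_lt hgt), if_neg (ne_of_gt hgt)]
        simp
      have hRR : R * R ^ (-1:ℝ) = 1 := by
        rw [Real.rpow_neg_one]
        field_simp
      rw [hell, hRR, mul_one]
      rw [hval] at h
      have hAx : (0:ℝ) ≤ R ^ (-ϑ+1) := Real.rpow_nonneg hR0.le _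
      have hd : (R ^ (-ϑ+1) - 1)/(-ϑ+1) = (1 - R ^ (-ϑ+1))/(ϑ-1) := by
        rw [div_eq_div_iff (by linarith) (by linarith)]
        ring
      rw [hd] at h
      have h5 : (1 - R ^ (-ϑ+1))/(ϑ-1) ≤ 1/(ϑ-1) := by
        gcongr
        linarith
      linarith

lemma f_eq_low (γ₀ γ₁ : ℝ) {s : ℝ} (hs : s ≤ 1) :
    (min s 1) ^ (-γ₀) * (max s 1) ^ (-γ₁) = s ^ (-γ₀) := by
  rw [min_eq_left hs, max_eq_right hs, Real.one_rpow, mul_one]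

lemma f_eq_high (γ₀ γ₁ : ℝ) {s : ℝ} (hs : 1 ≤ s) :
    (min s 1) ^ (-γ₀) * (max s 1) ^ (-γ₁) = s ^ (-γ₁) := by
  rw [min_eq_right hs, max_eq_left hs, Real.one_rpow, one_mul]

lemma lemB (γ₀ γ₁ : ℝ) (h₀ : γ₀ < 1) (h₁ : γ₁ < 1) :
    ∃ c₀ : ℝ, 0 < c₀ ∧ ∀ t : ℝ, 0 < t →
      IntervalIntegrable (fun s => (min s 1) ^ (-γ₀) * (max s 1) ^ (-γ₁)) volume 0 t ∧
      (∫ s in (0:ℝ)..t, (min s 1) ^ (-γ₀) * (max s 1) ^ (-γ₁)) ≤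
        c₀ * ((min t 1) ^ (1-γ₀) * (max t 1) ^ (1-γ₁)) := by
  have hp₀ : (0:ℝ) < 1 - γ₀ := by linarith
  have hp₁ : (0:ℝ) < 1 - γ₁ := by linarith
  refine ⟨1/(1-γ₀) + 1/(1-γ₁), by positivity, fun t ht => ?_⟩
  set f : ℝ → ℝ := fun s => (min s 1) ^ (-γ₀) * (max s 1) ^ (-γ₁) with hf
  rcases le_or_gt t 1 with hle | hgt
  · have hEq : EqOn (fun s : ℝ => s ^ (-γ₀)) f (uIcc 0 t) := by
      rw [uIcc_of_le ht.le]
      intro s hs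
      exact (f_eq_low γ₀ γ₁ (hs.2.trans hle)).symm
    have hint : IntervalIntegrable f volume 0 t := by
      apply (intervalIntegrable_rpow' (r := -γ₀) (by linarith)).congr
      exact (fun s hs => hEq (uIoc_subset_uIcc hs))
    refine ⟨hint, ?_⟩
    rw [← integral_congr hEq]
    rw [integral_rpow (Or.inl (by linarith))]
    rw [Real.zero_rpow (by intro hc; linarith)]
    rw [min_eq_left hle, max_eq_right hle, Real.one_rpow, mul_one]
    have hA : (0:ℝ) ≤ t ^ (-γ₀+1) := Real.rpow_nonneg ht.le _
    have e2 : (t ^ (-γ₀+1) - 0)/(-γ₀+1) = (t ^ (-γ₀+1))*(1-γ₀)⁻¹ := by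
      rw [div_eq_mul_inv, sub_zero]
      congr 2
      ring
    rw [e2]
    have e3 : t ^ ((1:ℝ)-γ₀) = t ^ (-γ₀+1) := by norm_num; ring_nf
    rw [e3, one_div, one_div]
    nlinarith [mul_nonneg hA (le_of_lt (inv_pos.mpr hp₁)), inv_pos.mpr hp₀]
  · have hEq1 : EqOn (fun s : ℝ => s ^ (-γ₀)) f (uIcc 0 1) := by
      rw [uIcc_of_le zero_le_one]
      intro s hs
      exact (f_eq_low γ₀ γ₁ hs.2).symm
    have hEq2 : EqOn (fun s : ℝ => s ^ (-γ₁)) f (uIcc 1 t) := by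
      rw [uIcc_of_le hgt.le]
      intro s hs
      exact (f_eq_high γ₀ γ₁ hs.1).symm
    have hint1 : IntervalIntegrable f volume 0 1 := by
      apply (intervalIntegrable_rpow' (r := -γ₀) (by linarith)).congr
      exact (fun s hs => hEq1 (uIoc_subset_uIcc hs))
    have hint2 : IntervalIntegrable f volume 1 t := by
      apply (intervalIntegrable_rpow' (r := -γ₁) (by linarith)).congr
      exact (fun s hs => hEq2 (uIoc_subset_uIcc hs))
    refine ⟨hint1.trans hint2, ?_⟩
    rw [← integral_add_adjacent_intervals hint1 hint2]
    have hv1 : (∫ s in (0:ℝ)..1, f s) = (1-γ₀)⁻¹ := by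
      rw [← integral_congr hEq1, integral_rpow (Or.inl (by linarith))]
      rw [Real.zero_rpow (by intro hc; linarith), Real.one_rpow]
      rw [sub_zero, div_eq_mul_inv, one_mul]
      congr 1
      ring
    have hv2 : (∫ s in (1:ℝ)..t, f s) = (t ^ (-γ₁+1) - 1)*(1-γ₁)⁻¹ := by
      rw [← integral_congr hEq2, integral_rpow (Or.inl (by linarith))]
      rw [Real.one_rpow, div_eq_mul_inv]
      congr 2
      ring
    rw [hv1, hv2]
    rw [min_eq_right hgt.le, max_eq_left hgt.le, Real.one_rpow, one_mul]
    have e3 : t ^ ((1:ℝ)-γ₁) = t ^ (-γ₁+1) := by norm_num; ring_nf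
    rw [e3, one_div, one_div]
    have hA : (1:ℝ) ≤ t ^ (-γ₁+1) := Real.one_le_rpow hgt.le (by linarith)
    have hD0 : (0:ℝ) < (1-γ₀)⁻¹ := inv_pos.mpr hp₀
    have hD1 : (0:ℝ) < (1-γ₁)⁻¹ := inv_pos.mpr hp₁
    nlinarith [mul_nonneg hD0.le (sub_nonneg.mpr hA), mul_nonneg hD1.le (sub_nonneg.mpr hA)]

lemma lemC (ϑ : ℝ) (hϑ : 0 ≤ ϑ) {R : ℝ} (hR : 0 < R) :
    min ((R/2) ^ (-ϑ)) 1 ≤ 2 * ell ϑ R := by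
  set θ := min ϑ 1 with hθ
  have hθ0 : 0 ≤ θ := le_min hϑ zero_le_one
  have hθ1 : θ ≤ 1 := min_le_right _ _
  have hM1 : (1:ℝ) ≤ max R 1 := le_max_right _ _
  have key : min ((R/2) ^ (-ϑ)) 1 ≤ 2 * (max R 1) ^ (-θ) := by
    rcases le_or_gt R 2 with hR2 | hR2
    · have hM2 : max R 1 ≤ 2 := max_le hR2 one_le_two
      have h1 : (max R 1) ^ (-1:ℝ) ≤ (max R 1) ^ (-θ) :=
        Real.rpow_le_rpow_of_exponent_le hM1 (by linarith)
      have h2 : (2:ℝ)⁻¹ ≤ (max R 1)⁻¹ := by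
        apply inv_anti₀ (by linarith) hM2
      rw [Real.rpow_neg_one] at h1
      calc min ((R/2) ^ (-ϑ)) 1 ≤ 1 := min_le_right _ _
        _ ≤ 2 * (max R 1) ^ (-θ) := by nlinarith
    · have hMR : max R 1 = R := max_eq_left (by linarith)
      have hR2' : (1:ℝ) ≤ R/2 := by linarith
      have h1 : (R/2) ^ (-ϑ) ≤ (R/2) ^ (-θ) :=
        Real.rpow_le_rpow_of_exponent_le hR2' (neg_le_neg (min_le_left _ _))
      have h2b : (2:ℝ) ^ (-θ) = ((2:ℝ) ^ θ)⁻¹ := Real.rpow_neg (by norm_num) θ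
      have h2 : (R/2) ^ (-θ) = R ^ (-θ) * 2 ^ θ := by
        rw [Real.div_rpow hR.le (by norm_num : (0:ℝ) ≤ 2), h2b, div_eq_mul_inv, inv_inv]
      have h3 : (2:ℝ) ^ θ ≤ 2 := by
        calc (2:ℝ) ^ θ ≤ 2 ^ (1:ℝ) := Real.rpow_le_rpow_of_exponent_le one_le_two hθ1
          _ = 2 := Real.rpow_one 2
      have h4 : (0:ℝ) ≤ R ^ (-θ) := Real.rpow_nonneg hR.le _
      calc min ((R/2) ^ (-ϑ)) 1 ≤ (R/2) ^ (-ϑ) := min_le_left _ _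
        _ ≤ (R/2) ^ (-θ) := h1
        _ = R ^ (-θ) * 2 ^ θ := h2
        _ ≤ R ^ (-θ) * 2 := by nlinarith
        _ = 2 * R ^ (-θ) := by ring
        _ = 2 * (max R 1) ^ (-θ) := by rw [hMR]
  calc min ((R/2) ^ (-ϑ)) 1 ≤ 2 * (max R 1) ^ (-θ) := key
    _ ≤ 2 * ((max R 1) ^ (-θ) * (1 + (if ϑ = 1 then (1:ℝ) else 0) * Real.log (max R 1))) := by
        have he := one_le_E ϑ R
        have h4 : (0:ℝ) ≤ (max R 1) ^ (-θ) := Real.rpow_nonneg (by linarith) _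
        nlinarith
    _ = 2 * ell ϑ R := rfl

lemma lemE {x y γ : ℝ} (hy : 0 < y) (h1 : y/2 ≤ x) (h2 : x ≤ y) :
    x ^ (-γ) ≤ 2 ^ |γ| * y ^ (-γ) := by
  have hx : 0 < x := lt_of_lt_of_le (half_pos hy) h1
  rcases le_or_gt 0 γ with hγ | hγ
  · have h3 : x ^ (-γ) ≤ (y/2) ^ (-γ) :=
      Real.rpow_le_rpow_of_nonpos (half_pos hy) h1 (neg_nonpos.mpr hγ)
    have h2b : (2:ℝ) ^ (-γ) = ((2:ℝ) ^ γ)⁻¹ := Real.rpow_neg (by norm_num) γ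
    have h4 : (y/2) ^ (-γ) = 2 ^ γ * y ^ (-γ) := by
      rw [Real.div_rpow hy.le (by norm_num : (0:ℝ) ≤ 2), h2b, div_eq_mul_inv, inv_inv, mul_comm]
    rw [abs_of_nonneg hγ]
    rw [h4] at h3
    exact h3
  · have h3 : x ^ (-γ) ≤ y ^ (-γ) :=
      Real.rpow_le_rpow hx.le h2 (by linarith)
    have h4 : (1:ℝ) ≤ 2 ^ |γ| := Real.one_le_rpow one_le_two (abs_nonneg _)
    have h5 : (0:ℝ) ≤ y ^ (-γ) := Real.rpow_nonneg hy.le _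
    nlinarith

end Stmt2Aux

open Stmt2Aux

/-- for `ϑ ≥ 0` and `γ₀, γ₁ < 1` there is `C > 0` such that for all `λ, t > 0`,
`∫₀^t min((λ(t-s))^{-ϑ},1) (min s 1)^{-γ₀} (max s 1)^{-γ₁} ds
  ≤ C ℓ_ϑ(λt) (min t 1)^{1-γ₀} (max t 1)^{1-γ₁}`. -/
theorem stmt_2 (ϑ γ₀ γ₁ : ℝ) (hϑ : 0 ≤ ϑ) (h₀ : γ₀ < 1) (h₁ : γ₁ < 1) :
    ∃ C : ℝ, 0 < C ∧ ∀ lam t : ℝ, 0 < lam → 0 < t →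
      (∫⁻ s in Set.Ioo (0 : ℝ) t,
        ENNReal.ofReal (min ((lam * (t - s)) ^ (-ϑ)) 1 *
          (min s 1) ^ (-γ₀) * (max s 1) ^ (-γ₁))) ≤
      ENNReal.ofReal (C * ell ϑ (lam * t) * (min t 1) ^ (1 - γ₀) * (max t 1) ^ (1 - γ₁)) := by
  obtain ⟨c, hc, hA⟩ := lemA ϑ hϑ
  obtain ⟨c₀, hc₀, hB⟩ := lemB γ₀ γ₁ h₀ h₁
  refine ⟨2 * c₀ + (2 ^ |γ₀| * 2 ^ |γ₁|) * c, by positivity, fun lam t hlam ht => ?_⟩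
  obtain ⟨hfint, hfbd⟩ := hB t ht
  have hm0 : (0:ℝ) < min t 1 := lt_min ht one_pos
  have hm1 : (0:ℝ) < max t 1 := lt_of_lt_of_le one_pos (le_max_right _ _)
  have hLnn : 0 ≤ ell ϑ (lam * t) := ell_nonneg _ _
  have hPnn : 0 ≤ (min t 1) ^ (1-γ₀) * (max t 1) ^ (1-γ₁) :=
    mul_nonneg (Real.rpow_nonneg hm0.le _) (Real.rpow_nonneg hm1.le _)
  have hABnn : 0 ≤ (min t 1) ^ (-γ₀) * (max t 1) ^ (-γ₁) :=
    mul_nonneg (Real.rpow_nonneg hm0.le _) (Real.rpow_nonneg hm1.le _)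
  have measf : Measurable fun s : ℝ => (min s 1) ^ (-γ₀) * (max s 1) ^ (-γ₁) :=
    ((measurable_rpow_const (-γ₀)).comp (measurable_id.min measurable_const)).mul
      ((measurable_rpow_const (-γ₁)).comp (measurable_id.max measurable_const))
  have measK : Measurable fun s : ℝ => min ((lam * (t - s)) ^ (-ϑ)) 1 :=
    meas_ker_comp ((measurable_const.sub measurable_id).const_mul lam) ϑ
  -- split the domain
  have hsplit : Set.Ioo (0:ℝ) t = Set.Ioc 0 (t/2) ∪ Set.Ioo (t/2) t :=
    (Set.Ioc_union_Ioo_eq_Ioo (by linarith) (by linarith)).symm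
  have hdisj : Disjoint (Set.Ioc (0:ℝ) (t/2)) (Set.Ioo (t/2) t) :=
    Set.disjoint_left.mpr fun x hx hx' => absurd hx.2 (not_le.mpr hx'.1)
  rw [hsplit, lintegral_union measurableSet_Ioo hdisj]
  -- pointwise bound on the first piece
  have key1 : ∀ s ∈ Set.Ioc (0:ℝ) (t/2),
      min ((lam * (t - s)) ^ (-ϑ)) 1 * (min s 1) ^ (-γ₀) * (max s 1) ^ (-γ₁) ≤
        2 * ell ϑ (lam * t) * ((min s 1) ^ (-γ₀) * (max s 1) ^ (-γ₁)) := by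
    intro s hs
    have hs0 : (0:ℝ) < s := hs.1
    have hst : s ≤ t/2 := hs.2
    have hfnn : 0 ≤ (min s 1) ^ (-γ₀) * (max s 1) ^ (-γ₁) :=
      mul_nonneg (Real.rpow_nonneg (le_min hs0.le zero_le_one) _)
        (Real.rpow_nonneg (le_trans zero_le_one (le_max_right s 1)) _)
    have hker : min ((lam * (t - s)) ^ (-ϑ)) 1 ≤ 2 * ell ϑ (lam * t) := by
      have h1 : lam * t / 2 ≤ lam * (t - s) := by nlinarith
      have h2 : (lam * (t - s)) ^ (-ϑ) ≤ (lam * t / 2) ^ (-ϑ) :=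
        Real.rpow_le_rpow_of_nonpos (by positivity) h1 (neg_nonpos.mpr hϑ)
      calc min ((lam * (t - s)) ^ (-ϑ)) 1 ≤ min ((lam * t / 2) ^ (-ϑ)) 1 :=
            min_le_min h2 le_rfl
        _ ≤ 2 * ell ϑ (lam * t) := lemC ϑ hϑ (by positivity)
    calc min ((lam * (t - s)) ^ (-ϑ)) 1 * (min s 1) ^ (-γ₀) * (max s 1) ^ (-γ₁)
        = min ((lam * (t - s)) ^ (-ϑ)) 1 * ((min s 1) ^ (-γ₀) * (max s 1) ^ (-γ₁)) := by ring
      _ ≤ 2 * ell ϑ (lam * t) * ((min s 1) ^ (-γ₀) * (max s 1) ^ (-γ₁)) :=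
          mul_le_mul_of_nonneg_right hker hfnn
  -- first piece
  have p1 : (∫⁻ s in Set.Ioc (0:ℝ) (t/2),
      ENNReal.ofReal (min ((lam * (t - s)) ^ (-ϑ)) 1 *
        (min s 1) ^ (-γ₀) * (max s 1) ^ (-γ₁))) ≤
      ENNReal.ofReal (2 * c₀ * (ell ϑ (lam * t) *
        ((min t 1) ^ (1-γ₀) * (max t 1) ^ (1-γ₁)))) := by
    have step1 : (∫⁻ s in Set.Ioc (0:ℝ) (t/2),
        ENNReal.ofReal (min ((lam * (t - s)) ^ (-ϑ)) 1 *
          (min s 1) ^ (-γ₀) * (max s 1) ^ (-γ₁))) ≤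
        ∫⁻ s in Set.Ioc (0:ℝ) (t/2),
          ENNReal.ofReal (2 * ell ϑ (lam * t) * ((min s 1) ^ (-γ₀) * (max s 1) ^ (-γ₁))) := by
      apply setLIntegral_mono ((measf.const_mul _).ennreal_ofReal)
      exact fun x hx => ENNReal.ofReal_le_ofReal (key1 x hx)
    have step2 : (∫⁻ s in Set.Ioc (0:ℝ) (t/2),
        ENNReal.ofReal (2 * ell ϑ (lam * t) * ((min s 1) ^ (-γ₀) * (max s 1) ^ (-γ₁)))) ≤
        ∫⁻ s in Set.Ioc (0:ℝ) t,
          ENNReal.ofReal (2 * ell ϑ (lam * t) * ((min s 1) ^ (-γ₀) * (max s 1) ^ (-γ₁))) :=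
      lintegral_mono_set (Set.Ioc_subset_Ioc le_rfl (by linarith))
    have hint2 : IntegrableOn
        (fun s => 2 * ell ϑ (lam * t) * ((min s 1) ^ (-γ₀) * (max s 1) ^ (-γ₁)))
        (Set.Ioc 0 t) := by
      have := ((intervalIntegrable_iff_integrableOn_Ioc_of_le ht.le).1 hfint)
      exact this.const_mul _
    have hnn : 0 ≤ᵐ[volume.restrict (Set.Ioc (0:ℝ) t)]
        fun s => 2 * ell ϑ (lam * t) * ((min s 1) ^ (-γ₀) * (max s 1) ^ (-γ₁)) := by
      refine (ae_restrict_iff' measurableSet_Ioc).2 (Filter.Eventually.of_forall fun s hs => ?_)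
      have : 0 ≤ (min s 1) ^ (-γ₀) * (max s 1) ^ (-γ₁) :=
        mul_nonneg (Real.rpow_nonneg (le_min hs.1.le zero_le_one) _)
          (Real.rpow_nonneg (le_trans zero_le_one (le_max_right s 1)) _)
      have h2 : 0 ≤ 2 * ell ϑ (lam * t) := by linarith
      exact mul_nonneg h2 this
    have step3 : (∫⁻ s in Set.Ioc (0:ℝ) t,
        ENNReal.ofReal (2 * ell ϑ (lam * t) * ((min s 1) ^ (-γ₀) * (max s 1) ^ (-γ₁)))) =
        ENNReal.ofReal (∫ s in Set.Ioc (0:ℝ) t,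
          2 * ell ϑ (lam * t) * ((min s 1) ^ (-γ₀) * (max s 1) ^ (-γ₁))) :=
      (ofReal_integral_eq_lintegral_ofReal hint2 hnn).symm
    have step4 : (∫ s in Set.Ioc (0:ℝ) t,
        2 * ell ϑ (lam * t) * ((min s 1) ^ (-γ₀) * (max s 1) ^ (-γ₁))) ≤
        2 * c₀ * (ell ϑ (lam * t) * ((min t 1) ^ (1-γ₀) * (max t 1) ^ (1-γ₁))) := by
      have e1 : (∫ s in Set.Ioc (0:ℝ) t,
          2 * ell ϑ (lam * t) * ((min s 1) ^ (-γ₀) * (max s 1) ^ (-γ₁))) =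
          2 * ell ϑ (lam * t) * ∫ s in (0:ℝ)..t, (min s 1) ^ (-γ₀) * (max s 1) ^ (-γ₁) := by
        rw [← intervalIntegral.integral_of_le ht.le, intervalIntegral.integral_const_mul]
      rw [e1]
      calc 2 * ell ϑ (lam * t) * ∫ s in (0:ℝ)..t, (min s 1) ^ (-γ₀) * (max s 1) ^ (-γ₁)
          ≤ 2 * ell ϑ (lam * t) * (c₀ * ((min t 1) ^ (1-γ₀) * (max t 1) ^ (1-γ₁))) := by
            apply mul_le_mul_of_nonneg_left hfbd (by linarith)
        _ = 2 * c₀ * (ell ϑ (lam * t) * ((min t 1) ^ (1-γ₀) * (max t 1) ^ (1-γ₁))) := by ring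
    calc _ ≤ _ := step1
      _ ≤ _ := step2
      _ = _ := step3
      _ ≤ _ := ENNReal.ofReal_le_ofReal step4
  -- pointwise bound on the second piece
  have key2 : ∀ s ∈ Set.Ioo (t/2) t,
      min ((lam * (t - s)) ^ (-ϑ)) 1 * (min s 1) ^ (-γ₀) * (max s 1) ^ (-γ₁) ≤
        (2 ^ |γ₀| * 2 ^ |γ₁|) * ((min t 1) ^ (-γ₀) * (max t 1) ^ (-γ₁)) *
          min ((lam * (t - s)) ^ (-ϑ)) 1 := by
    intro s hs
    have hs1 : t/2 < s := hs.1
    have hs2 : s < t := hs.2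
    have hs0 : (0:ℝ) < s := lt_of_le_of_lt (by linarith) hs1
    have e0 : min t 1 / 2 ≤ min s 1 :=
      le_min (by linarith [min_le_left t 1]) (by linarith [min_le_right t 1])
    have e1 : min s 1 ≤ min t 1 := min_le_min hs2.le le_rfl
    have e2 : max t 1 / 2 ≤ max s 1 := by
      rcases le_total t 1 with h | h
      · rw [max_eq_right h]
        linarith [le_max_right s 1]
      · rw [max_eq_left h]
        linarith [le_max_left s 1]
    have e3 : max s 1 ≤ max t 1 := max_le_max hs2.le le_rfl
    have b0 : (min s 1) ^ (-γ₀) ≤ 2 ^ |γ₀| * (min t 1) ^ (-γ₀) := lemE hm0 e0 e1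
    have b1 : (max s 1) ^ (-γ₁) ≤ 2 ^ |γ₁| * (max t 1) ^ (-γ₁) := lemE hm1 e2 e3
    have hk0 : 0 ≤ min ((lam * (t - s)) ^ (-ϑ)) 1 :=
      le_min (Real.rpow_nonneg (by nlinarith) _) zero_le_one
    have ha0 : 0 ≤ (min s 1) ^ (-γ₀) := Real.rpow_nonneg (le_min hs0.le zero_le_one) _
    have hb0 : 0 ≤ (max s 1) ^ (-γ₁) :=
      Real.rpow_nonneg (le_trans zero_le_one (le_max_right s 1)) _
    have hb0' : 0 ≤ 2 ^ |γ₀| * (min t 1) ^ (-γ₀) := by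
      have := Real.rpow_nonneg hm0.le (-γ₀)
      positivity
    calc min ((lam * (t - s)) ^ (-ϑ)) 1 * (min s 1) ^ (-γ₀) * (max s 1) ^ (-γ₁)
        ≤ min ((lam * (t - s)) ^ (-ϑ)) 1 * (2 ^ |γ₀| * (min t 1) ^ (-γ₀)) *
            (2 ^ |γ₁| * (max t 1) ^ (-γ₁)) := by
          apply mul_le_mul _ b1 hb0 _
          · exact mul_le_mul_of_nonneg_left b0 hk0
          · exact mul_nonneg hk0 hb0'
      _ = (2 ^ |γ₀| * 2 ^ |γ₁|) * ((min t 1) ^ (-γ₀) * (max t 1) ^ (-γ₁)) *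
            min ((lam * (t - s)) ^ (-ϑ)) 1 := by ring
  -- kernel integral bound
  have hkint : IntegrableOn (fun s => min ((lam * (t - s)) ^ (-ϑ)) 1) (Set.Ioc (0:ℝ) t) := by
    apply integrableOn_of_meas_bdd measK measurableSet_Ioc measure_Ioc_lt_top
    intro x hx
    exact ker_abs_le (mul_nonneg hlam.le (by linarith [hx.2]))
  have hknn : 0 ≤ᵐ[volume.restrict (Set.Ioc (0:ℝ) t)]
      fun s => min ((lam * (t - s)) ^ (-ϑ)) 1 := by
    refine (ae_restrict_iff' measurableSet_Ioc).2 (Filter.Eventually.of_forall fun x hx => ?_)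
    exact le_min (Real.rpow_nonneg (mul_nonneg hlam.le (by linarith [hx.2])) _) zero_le_one
  have hkval : (∫ s in Set.Ioc (0:ℝ) t, min ((lam * (t - s)) ^ (-ϑ)) 1) ≤
      c * t * ell ϑ (lam * t) := by
    rw [← intervalIntegral.integral_of_le ht.le]
    have e1 : (∫ s in (0:ℝ)..t, min ((lam * (t - s)) ^ (-ϑ)) 1) =
        ∫ u in (0:ℝ)..t, min ((lam * u) ^ (-ϑ)) 1 := by
      have := intervalIntegral.integral_comp_sub_left (a := 0) (b := t)
        (fun u : ℝ => min ((lam * u) ^ (-ϑ)) 1) t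
      simpa using this
    have e2 : (∫ u in (0:ℝ)..t, min ((lam * u) ^ (-ϑ)) 1) =
        lam⁻¹ * ∫ v in (0:ℝ)..(lam * t), min (v ^ (-ϑ)) 1 := by
      have h := intervalIntegral.integral_comp_mul_left (a := 0) (b := t)
        (fun v : ℝ => min (v ^ (-ϑ)) 1) hlam.ne'
      simpa [smul_eq_mul] using h
    rw [e1, e2]
    have hK := hA (lam * t) (by positivity)
    calc lam⁻¹ * ∫ v in (0:ℝ)..(lam * t), min (v ^ (-ϑ)) 1
        ≤ lam⁻¹ * (c * (lam * t * ell ϑ (lam * t))) := by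
          apply mul_le_mul_of_nonneg_left hK (by positivity)
      _ = c * t * ell ϑ (lam * t) := by field_simp
  -- second piece
  have p2 : (∫⁻ s in Set.Ioo (t/2) t,
      ENNReal.ofReal (min ((lam * (t - s)) ^ (-ϑ)) 1 *
        (min s 1) ^ (-γ₀) * (max s 1) ^ (-γ₁))) ≤
      ENNReal.ofReal ((2 ^ |γ₀| * 2 ^ |γ₁|) * c * (ell ϑ (lam * t) *
        ((min t 1) ^ (1-γ₀) * (max t 1) ^ (1-γ₁)))) := by
    have hMABnn : 0 ≤ (2 ^ |γ₀| * 2 ^ |γ₁|) * ((min t 1) ^ (-γ₀) * (max t 1) ^ (-γ₁)) := by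
      apply mul_nonneg (by positivity) hABnn
    have step1 : (∫⁻ s in Set.Ioo (t/2) t,
        ENNReal.ofReal (min ((lam * (t - s)) ^ (-ϑ)) 1 *
          (min s 1) ^ (-γ₀) * (max s 1) ^ (-γ₁))) ≤
        ∫⁻ s in Set.Ioo (t/2) t,
          ENNReal.ofReal ((2 ^ |γ₀| * 2 ^ |γ₁|) * ((min t 1) ^ (-γ₀) * (max t 1) ^ (-γ₁)) *
            min ((lam * (t - s)) ^ (-ϑ)) 1) := by
      apply setLIntegral_mono ((measK.const_mul _).ennreal_ofReal)
      exact fun x hx => ENNReal.ofReal_le_ofReal (key2 x hx)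
    have step2 : (∫⁻ s in Set.Ioo (t/2) t,
        ENNReal.ofReal ((2 ^ |γ₀| * 2 ^ |γ₁|) * ((min t 1) ^ (-γ₀) * (max t 1) ^ (-γ₁)) *
          min ((lam * (t - s)) ^ (-ϑ)) 1)) =
        ENNReal.ofReal ((2 ^ |γ₀| * 2 ^ |γ₁|) * ((min t 1) ^ (-γ₀) * (max t 1) ^ (-γ₁))) *
          ∫⁻ s in Set.Ioo (t/2) t, ENNReal.ofReal (min ((lam * (t - s)) ^ (-ϑ)) 1) := by
      simp_rw [ENNReal.ofReal_mul hMABnn]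
      rw [lintegral_const_mul' _ _ ENNReal.ofReal_ne_top]
    have step3 : (∫⁻ s in Set.Ioo (t/2) t,
        ENNReal.ofReal (min ((lam * (t - s)) ^ (-ϑ)) 1)) ≤
        ∫⁻ s in Set.Ioc (0:ℝ) t, ENNReal.ofReal (min ((lam * (t - s)) ^ (-ϑ)) 1) :=
      lintegral_mono_set (fun x hx => ⟨by linarith [hx.1], hx.2.le⟩)
    have step4 : (∫⁻ s in Set.Ioc (0:ℝ) t,
        ENNReal.ofReal (min ((lam * (t - s)) ^ (-ϑ)) 1)) =
        ENNReal.ofReal (∫ s in Set.Ioc (0:ℝ) t, min ((lam * (t - s)) ^ (-ϑ)) 1) :=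
      (ofReal_integral_eq_lintegral_ofReal hkint hknn).symm
    calc (∫⁻ s in Set.Ioo (t/2) t,
        ENNReal.ofReal (min ((lam * (t - s)) ^ (-ϑ)) 1 *
          (min s 1) ^ (-γ₀) * (max s 1) ^ (-γ₁)))
        ≤ _ := step1
      _ = _ := step2
      _ ≤ ENNReal.ofReal ((2 ^ |γ₀| * 2 ^ |γ₁|) * ((min t 1) ^ (-γ₀) * (max t 1) ^ (-γ₁))) *
          ENNReal.ofReal (∫ s in Set.Ioc (0:ℝ) t, min ((lam * (t - s)) ^ (-ϑ)) 1) := by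
          rw [← step4]
          exact mul_le_mul_right step3 _
      _ ≤ ENNReal.ofReal ((2 ^ |γ₀| * 2 ^ |γ₁|) * ((min t 1) ^ (-γ₀) * (max t 1) ^ (-γ₁))) *
          ENNReal.ofReal (c * t * ell ϑ (lam * t)) :=
          mul_le_mul_right (ENNReal.ofReal_le_ofReal hkval) _
      _ = ENNReal.ofReal ((2 ^ |γ₀| * 2 ^ |γ₁|) * ((min t 1) ^ (-γ₀) * (max t 1) ^ (-γ₁)) *
          (c * t * ell ϑ (lam * t))) := (ENNReal.ofReal_mul hMABnn).symm
      _ = ENNReal.ofReal ((2 ^ |γ₀| * 2 ^ |γ₁|) * c * (ell ϑ (lam * t) *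
          ((min t 1) ^ (1-γ₀) * (max t 1) ^ (1-γ₁)))) := by
          congr 1
          have htP : min t 1 * max t 1 = t := by rw [min_mul_max, mul_one]
          have r0 : (min t 1) ^ ((1:ℝ)-γ₀) = (min t 1) ^ (-γ₀) * (min t 1) := by
            rw [show (1:ℝ)-γ₀ = -γ₀+1 by ring, Real.rpow_add hm0, Real.rpow_one]
          have r1 : (max t 1) ^ ((1:ℝ)-γ₁) = (max t 1) ^ (-γ₁) * (max t 1) := by
            rw [show (1:ℝ)-γ₁ = -γ₁+1 by ring, Real.rpow_add hm1, Real.rpow_one]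
          have hP : (min t 1) ^ ((1:ℝ)-γ₀) * (max t 1) ^ ((1:ℝ)-γ₁) =
              ((min t 1) ^ (-γ₀) * (max t 1) ^ (-γ₁)) * t := by
            rw [r0, r1, mul_mul_mul_comm, htP]
          rw [hP]; ring
  -- combine
  refine le_trans (add_le_add p1 p2) (le_of_eq ?_)
  rw [← ENNReal.ofReal_add (mul_nonneg (by positivity) (mul_nonneg hLnn hPnn))
    (mul_nonneg (by positivity) (mul_nonneg hLnn hPnn))]
  congr 1
  ring
end

section
/- Let ϑ ∈ [0,∞) and γ < 1. Then there exists a constant C = C(ϑ, γ) > 0 such that for all λ > 0 and t > 0, ∫₀ᵗ min((λ(t−s))^{−ϑ}, 1) · s^{−γ} ds ≤ C · ℓ_ϑ(λt) · t^{1−γ}. -/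
open MeasureTheory
open scoped ENNReal

lemma ell_pos {ϑ r : ℝ} (hr : 0 < r) : 0 < ell ϑ r := by
  have h1 : (1:ℝ) ≤ max r 1 := le_max_right _ _
  have h2 : (0:ℝ) ≤ Real.log (max r 1) := Real.log_nonneg h1
  have : (0:ℝ) < (max r 1) ^ (-(min ϑ 1)) := Real.rpow_pos_of_pos (by linarith) _
  apply mul_pos this
  split <;> nlinarith

lemma rpow_anti {ϑ : ℝ} (hϑ : 0 ≤ ϑ) {x y : ℝ} (hx : 0 < x) (hxy : x ≤ y) :
    y ^ (-ϑ) ≤ x ^ (-ϑ) := by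
  rw [Real.rpow_neg hx.le, Real.rpow_neg (hx.trans_le hxy).le]
  exact inv_anti₀ (Real.rpow_pos_of_pos hx _) (Real.rpow_le_rpow hx.le hxy hϑ)

lemma min_nonneg' {x : ℝ} (hx : 0 ≤ x) : 0 ≤ min (x ^ (-(ϑ:ℝ))) 1 :=
  le_min (Real.rpow_nonneg hx _) zero_le_one

/-- lintegral of s^(-γ) over (0,t). -/
lemma lint_rpow {γ t : ℝ} (hγ : γ < 1) (ht : 0 < t) :
    ∫⁻ s in Set.Ioo (0:ℝ) t, ENNReal.ofReal (s ^ (-γ)) =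
      ENNReal.ofReal (t ^ (1 - γ) / (1 - γ)) := by
  have hint : IntegrableOn (fun s : ℝ => s ^ (-γ)) (Set.Ioo 0 t) :=
    ((intervalIntegral.intervalIntegrable_rpow' (by linarith)).1).mono_set Set.Ioo_subset_Ioc_self
  have hnn : 0 ≤ᵐ[volume.restrict (Set.Ioo (0:ℝ) t)] fun s : ℝ => s ^ (-γ) :=
    (ae_restrict_iff' measurableSet_Ioo).2 <| ae_of_all _ fun s hs => Real.rpow_nonneg hs.1.le _
  rw [← ofReal_integral_eq_lintegral_ofReal hint hnn]
  congr 1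
  rw [← integral_Ioc_eq_integral_Ioo, ← intervalIntegral.integral_of_le ht.le,
    integral_rpow (Or.inl (by linarith))]
  rw [Real.zero_rpow (by linarith : -γ + 1 ≠ 0)]
  ring_nf

/-- reflection -/
lemma lint_reflect (t : ℝ) (f : ℝ → ℝ≥0∞) :
    ∫⁻ s in Set.Ioo (0:ℝ) t, f (t - s) = ∫⁻ u in Set.Ioo (0:ℝ) t, f u := by
  have hmp : MeasurePreserving (fun x : ℝ => t - x) volume volume :=
    Measure.measurePreserving_sub_left volume t
  have hme : MeasurableEmbedding (fun x : ℝ => t - x) :=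
    (MeasurableEquiv.subLeft t).measurableEmbedding
  have hpre : (fun x : ℝ => t - x) ⁻¹' Set.Ioo 0 t = Set.Ioo 0 t := by
    ext x
    simp only [Set.mem_preimage, Set.mem_Ioo]
    constructor <;> rintro ⟨h1, h2⟩ <;> constructor <;> linarith
  conv_lhs => rw [← hpre]
  exact hmp.setLIntegral_comp_preimage_emb hme f _

set_option maxHeartbeats 1000000 in
lemma core (ϑ : ℝ) (hϑ : 0 ≤ ϑ) :
    ∃ C : ℝ, 0 < C ∧ ∀ lam t : ℝ, 0 < lam → 0 < t →
      (∫⁻ u in Set.Ioo (0:ℝ) t, ENNReal.ofReal (min ((lam * u) ^ (-ϑ)) 1)) ≤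
        ENNReal.ofReal (C * t * ell ϑ (lam * t)) := by
  refine ⟨2 + |1 - ϑ|⁻¹, by positivity, fun lam t hlam ht => ?_⟩
  set C : ℝ := 2 + |1 - ϑ|⁻¹ with hCdef
  have hC1 : (1:ℝ) ≤ C := by
    have : (0:ℝ) ≤ |1 - ϑ|⁻¹ := by positivity
    simp only [hCdef]; linarith
  have hr : 0 < lam * t := mul_pos hlam ht
  have hone : ∀ u : ℝ, ENNReal.ofReal (min ((lam * u) ^ (-ϑ)) 1) ≤ 1 := fun u =>
    ENNReal.ofReal_le_one.2 (min_le_right _ _)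
  by_cases hle : lam * t ≤ 1
  · -- small r : integrand ≤ 1, ℓ = 1
    have hell : ell ϑ (lam * t) = 1 := by
      rw [ell, max_eq_right hle]
      simp [Real.one_rpow, Real.log_one]
    calc ∫⁻ u in Set.Ioo (0:ℝ) t, ENNReal.ofReal (min ((lam * u) ^ (-ϑ)) 1)
        ≤ ∫⁻ _ in Set.Ioo (0:ℝ) t, 1 := setLIntegral_mono measurable_const fun u _ => hone u
      _ = ENNReal.ofReal t := by rw [setLIntegral_const, Real.volume_Ioo, one_mul, sub_zero]
      _ ≤ ENNReal.ofReal (C * t * ell ϑ (lam * t)) := by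
          rw [hell]; exact ENNReal.ofReal_le_ofReal (by nlinarith)
  · push_neg at hle
    have ha : (0:ℝ) < lam⁻¹ := by positivity
    have hat : lam⁻¹ < t := by
      rw [inv_lt_iff_one_lt_mul₀' hlam]
      linarith [mul_comm lam t]
    have hsplit : Set.Ioc (0:ℝ) lam⁻¹ ∪ Set.Ioo lam⁻¹ t = Set.Ioo 0 t :=
      Set.Ioc_union_Ioo_eq_Ioo ha.le hat
    have hdisj : Disjoint (Set.Ioc (0:ℝ) lam⁻¹) (Set.Ioo lam⁻¹ t) :=
      Set.disjoint_left.2 fun x hx hx' => absurd hx.2 (not_le.2 hx'.1)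
    rw [← hsplit, lintegral_union measurableSet_Ioo hdisj]
    -- piece 1
    have hp1 : (∫⁻ u in Set.Ioc (0:ℝ) lam⁻¹, ENNReal.ofReal (min ((lam * u) ^ (-ϑ)) 1)) ≤
        ENNReal.ofReal lam⁻¹ := by
      calc (∫⁻ u in Set.Ioc (0:ℝ) lam⁻¹, ENNReal.ofReal (min ((lam * u) ^ (-ϑ)) 1))
          ≤ ∫⁻ _ in Set.Ioc (0:ℝ) lam⁻¹, 1 :=
            setLIntegral_mono measurable_const fun u _ => hone u
        _ = ENNReal.ofReal lam⁻¹ := by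
            rw [setLIntegral_const, Real.volume_Ioc, one_mul, sub_zero]
    -- piece 2
    have hmeas : Measurable fun u : ℝ => ENNReal.ofReal (lam ^ (-ϑ) * u ^ (-ϑ)) := by
      fun_prop
    have hp2 : (∫⁻ u in Set.Ioo lam⁻¹ t, ENNReal.ofReal (min ((lam * u) ^ (-ϑ)) 1)) ≤
        ∫⁻ u in Set.Ioo lam⁻¹ t, ENNReal.ofReal (lam ^ (-ϑ) * u ^ (-ϑ)) := by
      refine setLIntegral_mono hmeas fun u hu => ENNReal.ofReal_le_ofReal ?_
      have hu0 : (0:ℝ) < u := ha.trans hu.1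
      calc min ((lam * u) ^ (-ϑ)) 1 ≤ (lam * u) ^ (-ϑ) := min_le_left _ _
        _ = lam ^ (-ϑ) * u ^ (-ϑ) := Real.mul_rpow hlam.le hu0.le
    have hcont : ContinuousOn (fun u : ℝ => lam ^ (-ϑ) * u ^ (-ϑ)) (Set.Icc lam⁻¹ t) := by
      refine continuousOn_const.mul (ContinuousOn.rpow_const continuousOn_id fun x hx => ?_)
      exact Or.inl (ne_of_gt (lt_of_lt_of_le ha hx.1))
    have hint : IntegrableOn (fun u : ℝ => lam ^ (-ϑ) * u ^ (-ϑ)) (Set.Ioo lam⁻¹ t) :=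
      (hcont.integrableOn_Icc).mono_set Set.Ioo_subset_Icc_self
    have hnn : 0 ≤ᵐ[volume.restrict (Set.Ioo lam⁻¹ t)] fun u : ℝ => lam ^ (-ϑ) * u ^ (-ϑ) :=
      (ae_restrict_iff' measurableSet_Ioo).2 <| ae_of_all _ fun u hu =>
        mul_nonneg (Real.rpow_nonneg hlam.le _) (Real.rpow_nonneg (ha.trans hu.1).le _)
    have heq : (∫⁻ u in Set.Ioo lam⁻¹ t, ENNReal.ofReal (lam ^ (-ϑ) * u ^ (-ϑ))) =
        ENNReal.ofReal (lam ^ (-ϑ) * ∫ u in Set.Ioo lam⁻¹ t, u ^ (-ϑ)) := by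
      rw [← integral_const_mul]
      exact (ofReal_integral_eq_lintegral_ofReal hint hnn).symm
    have hIval : (∫ u in Set.Ioo lam⁻¹ t, u ^ (-ϑ)) = ∫ u in lam⁻¹..t, u ^ (-ϑ) := by
      rw [← integral_Ioc_eq_integral_Ioo, ← intervalIntegral.integral_of_le hat.le]
    have hXnn : 0 ≤ lam ^ (-ϑ) * ∫ u in Set.Ioo lam⁻¹ t, u ^ (-ϑ) := by
      refine mul_nonneg (Real.rpow_nonneg hlam.le _) ?_
      exact setIntegral_nonneg measurableSet_Ioo fun u hu => Real.rpow_nonneg (ha.trans hu.1).le _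
    have hfinal : lam⁻¹ + lam ^ (-ϑ) * ∫ u in Set.Ioo lam⁻¹ t, u ^ (-ϑ) ≤
        C * t * ell ϑ (lam * t) := by
      have hmax : max (lam * t) 1 = lam * t := max_eq_left hle.le
      have htr : t * (lam * t)⁻¹ = lam⁻¹ := by field_simp
      by_cases hϑ1 : ϑ = 1
      · subst hϑ1
        have hI : (∫ u in Set.Ioo lam⁻¹ t, u ^ (-(1:ℝ))) = Real.log (lam * t) := by
          rw [hIval]
          simp_rw [Real.rpow_neg_one]
          rw [integral_inv (by
            rw [Set.uIcc_of_le hat.le]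
            exact fun h => absurd h.1 (not_le.2 ha))]
          rw [show t / lam⁻¹ = lam * t by field_simp]
        rw [hI, ell, hmax, if_pos rfl, one_mul, min_self, Real.rpow_neg_one,
          Real.rpow_neg_one]
        have hlog : 0 ≤ Real.log (lam * t) := Real.log_nonneg hle.le
        have : C * t * ((lam * t)⁻¹ * (1 + Real.log (lam * t))) =
            C * lam⁻¹ * (1 + Real.log (lam * t)) := by rw [← htr]; ring
        rw [this]
        nlinarith [mul_nonneg (mul_nonneg (by linarith : (0:ℝ) ≤ C - 1) ha.le)
          (by linarith : (0:ℝ) ≤ 1 + Real.log (lam * t))]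
      · have hI : (∫ u in Set.Ioo lam⁻¹ t, u ^ (-ϑ)) =
            (t ^ (-ϑ + 1) - (lam⁻¹) ^ (-ϑ + 1)) / (-ϑ + 1) := by
          rw [hIval, integral_rpow (Or.inr ⟨by
              intro h; exact hϑ1 (by linarith [neg_injective h]), by
              rw [Set.uIcc_of_le hat.le]
              exact fun h => absurd h.1 (not_le.2 ha)⟩)]
        rw [hI, ell, hmax, if_neg hϑ1, zero_mul, add_zero, mul_one]
        have hlamϑ : (0:ℝ) ≤ lam ^ (-ϑ) := Real.rpow_nonneg hlam.le _
        rcases lt_or_gt_of_ne hϑ1 with hlt | hgt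
        · -- ϑ < 1
          have h1ϑ : (0:ℝ) < 1 - ϑ := by linarith
          have hmin : min ϑ 1 = ϑ := min_eq_left hlt.le
          rw [hmin]
          have hP : 0 < t * (lam * t) ^ (-ϑ) := mul_pos ht (Real.rpow_pos_of_pos hr _)
          have e1 : lam ^ (-ϑ) * t ^ (-ϑ + 1) = t * (lam * t) ^ (-ϑ) := by
            rw [Real.mul_rpow hlam.le ht.le, Real.rpow_add ht, Real.rpow_one]; ring
          have hb1 : lam ^ (-ϑ) * ((t ^ (-ϑ + 1) - lam⁻¹ ^ (-ϑ + 1)) / (-ϑ + 1)) ≤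
              t * (lam * t) ^ (-ϑ) * (1 - ϑ)⁻¹ := by
            have h2 : (0:ℝ) ≤ lam⁻¹ ^ (-ϑ + 1) := Real.rpow_nonneg ha.le _
            calc lam ^ (-ϑ) * ((t ^ (-ϑ + 1) - lam⁻¹ ^ (-ϑ + 1)) / (-ϑ + 1))
                ≤ lam ^ (-ϑ) * (t ^ (-ϑ + 1) / (-ϑ + 1)) := by
                  apply mul_le_mul_of_nonneg_left _ hlamϑ
                  apply div_le_div_of_nonneg_right ?_ (by linarith)
                  linarith
              _ = t * (lam * t) ^ (-ϑ) * (1 - ϑ)⁻¹ := by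
                  rw [mul_div_assoc', e1, show -ϑ + 1 = 1 - ϑ by ring, div_eq_mul_inv]
          have hb2 : lam⁻¹ ≤ t * (lam * t) ^ (-ϑ) := by
            rw [← htr, ← Real.rpow_neg_one (lam * t)]
            exact mul_le_mul_of_nonneg_left
              (Real.rpow_le_rpow_of_exponent_le hle.le (by linarith)) ht.le
          have hCeq : C = 2 + (1 - ϑ)⁻¹ := by rw [hCdef, abs_of_pos h1ϑ]
          have hinv : (0:ℝ) ≤ (1 - ϑ)⁻¹ := by positivity
          nlinarith [hb1, hb2, hP, mul_nonneg hP.le hinv]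
        · -- ϑ > 1
          have hϑ1' : (0:ℝ) < ϑ - 1 := by linarith
          have hmin : min ϑ 1 = 1 := min_eq_right hgt.le
          rw [hmin]
          have e2 : lam⁻¹ ^ (-ϑ + 1) = lam ^ (ϑ - 1) := by
            rw [Real.inv_rpow hlam.le, ← Real.rpow_neg hlam.le, show -(-ϑ + 1) = ϑ - 1 by ring]
          have e3 : lam ^ (-ϑ) * lam ^ (ϑ - 1) = lam⁻¹ := by
            rw [← Real.rpow_add hlam, show -ϑ + (ϑ - 1) = -1 by ring, Real.rpow_neg_one]
          have hb1 : lam ^ (-ϑ) * ((t ^ (-ϑ + 1) - lam⁻¹ ^ (-ϑ + 1)) / (-ϑ + 1)) ≤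
              lam⁻¹ * (ϑ - 1)⁻¹ := by
            have htnn : (0:ℝ) ≤ t ^ (-ϑ + 1) := Real.rpow_nonneg ht.le _
            have : (t ^ (-ϑ + 1) - lam⁻¹ ^ (-ϑ + 1)) / (-ϑ + 1) =
                (lam⁻¹ ^ (-ϑ + 1) - t ^ (-ϑ + 1)) / (ϑ - 1) := by
              rw [div_eq_div_iff (by linarith) (by linarith)]; ring
            rw [this, e2]
            calc lam ^ (-ϑ) * ((lam ^ (ϑ - 1) - t ^ (-ϑ + 1)) / (ϑ - 1))
                ≤ lam ^ (-ϑ) * (lam ^ (ϑ - 1) / (ϑ - 1)) := by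
                  apply mul_le_mul_of_nonneg_left _ hlamϑ
                  apply div_le_div_of_nonneg_right ?_ hϑ1'.le
                  linarith
              _ = lam⁻¹ * (ϑ - 1)⁻¹ := by rw [mul_div_assoc', e3, div_eq_mul_inv]
          have hrhs : C * t * (lam * t) ^ (-(1:ℝ)) = C * lam⁻¹ := by
            rw [Real.rpow_neg_one, show C * t * (lam * t)⁻¹ = C * (t * (lam * t)⁻¹) by ring, htr]
          rw [hrhs]
          have hCeq : C = 2 + (ϑ - 1)⁻¹ := by
            rw [hCdef, abs_of_neg (by linarith : 1 - ϑ < 0), show -(1 - ϑ) = ϑ - 1 by ring]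
          have hinv : (0:ℝ) ≤ (ϑ - 1)⁻¹ := by positivity
          nlinarith [hb1, ha, mul_nonneg ha.le hinv]
    calc (∫⁻ u in Set.Ioc (0:ℝ) lam⁻¹, ENNReal.ofReal (min ((lam * u) ^ (-ϑ)) 1)) +
          ∫⁻ u in Set.Ioo lam⁻¹ t, ENNReal.ofReal (min ((lam * u) ^ (-ϑ)) 1)
        ≤ ENNReal.ofReal lam⁻¹ +
            ENNReal.ofReal (lam ^ (-ϑ) * ∫ u in Set.Ioo lam⁻¹ t, u ^ (-ϑ)) :=
          add_le_add hp1 (hp2.trans_eq heq)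
      _ = ENNReal.ofReal (lam⁻¹ + lam ^ (-ϑ) * ∫ u in Set.Ioo lam⁻¹ t, u ^ (-ϑ)) :=
          (ENNReal.ofReal_add ha.le hXnn).symm
      _ ≤ ENNReal.ofReal (C * t * ell ϑ (lam * t)) := ENNReal.ofReal_le_ofReal hfinal

lemma A_le {ϑ lam t : ℝ} (hϑ : 0 ≤ ϑ) (hlam : 0 < lam) (ht : 0 < t) :
    min ((lam * (t / 2)) ^ (-ϑ)) 1 ≤ ((2:ℝ) ^ ϑ + 2) * ell ϑ (lam * t) := by
  have hr : 0 < lam * t := mul_pos hlam ht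
  have h2ϑ : (0:ℝ) < 2 ^ ϑ := Real.rpow_pos_of_pos two_pos _
  have hm0 : 0 ≤ min ϑ 1 := le_min hϑ zero_le_one
  have hm1 : min ϑ 1 ≤ 1 := min_le_right _ _
  have hfac : (1:ℝ) ≤ 1 + (if ϑ = 1 then (1:ℝ) else 0) * Real.log (max (lam * t) 1) := by
    have : (0:ℝ) ≤ Real.log (max (lam * t) 1) := Real.log_nonneg (le_max_right _ _)
    split <;> nlinarith
  have hbase : (0:ℝ) < (max (lam * t) 1) ^ (-(min ϑ 1)) :=
    Real.rpow_pos_of_pos (lt_of_lt_of_le one_pos (le_max_right _ _)) _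
  have heq2 : lam * (t / 2) = (lam * t) / 2 := by ring
  by_cases h2 : lam * t ≤ 2
  · -- small r : ℓ ≥ 1/2, min ≤ 1
    have hl : (1:ℝ)/2 ≤ ell ϑ (lam * t) := by
      have hb : (2:ℝ) ^ (-(min ϑ 1)) ≤ (max (lam * t) 1) ^ (-(min ϑ 1)) :=
        rpow_anti hm0 (lt_of_lt_of_le one_pos (le_max_right _ _)) (max_le h2 one_le_two)
      have hb2 : (1:ℝ)/2 ≤ (2:ℝ) ^ (-(min ϑ 1)) := by
        have := Real.rpow_le_rpow_of_exponent_le one_le_two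
          (by linarith : -(1:ℝ) ≤ -(min ϑ 1))
        rwa [Real.rpow_neg_one, ← one_div] at this
      calc (1:ℝ)/2 ≤ (max (lam * t) 1) ^ (-(min ϑ 1)) := le_trans hb2 hb
        _ ≤ ell ϑ (lam * t) := le_mul_of_one_le_right hbase.le hfac
    have hmin1 : min ((lam * (t / 2)) ^ (-ϑ)) 1 ≤ 1 := min_le_right _ _
    nlinarith
  · push_neg at h2
    have hr1 : (1:ℝ) ≤ lam * t := by linarith
    have hmax : max (lam * t) 1 = lam * t := max_eq_left hr1
    have hstep : (lam * (t / 2)) ^ (-ϑ) = 2 ^ ϑ * (lam * t) ^ (-ϑ) := by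
      rw [heq2, Real.div_rpow hr.le (by norm_num : (0:ℝ) ≤ 2), Real.rpow_neg hr.le,
        Real.rpow_neg (by norm_num : (0:ℝ) ≤ 2)]
      rw [div_eq_mul_inv, inv_inv, mul_comm]
    have hrm : (lam * t) ^ (-ϑ) ≤ (lam * t) ^ (-(min ϑ 1)) :=
      Real.rpow_le_rpow_of_exponent_le hr1 (by
        have := min_le_left ϑ 1; linarith)
    have hl : (lam * t) ^ (-(min ϑ 1)) ≤ ell ϑ (lam * t) := by
      rw [ell, hmax]
      exact le_mul_of_one_le_right (Real.rpow_pos_of_pos hr _).le (hmax ▸ hfac)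
    calc min ((lam * (t / 2)) ^ (-ϑ)) 1 ≤ (lam * (t / 2)) ^ (-ϑ) := min_le_left _ _
      _ = 2 ^ ϑ * (lam * t) ^ (-ϑ) := hstep
      _ ≤ 2 ^ ϑ * ell ϑ (lam * t) := by
          exact mul_le_mul_of_nonneg_left (le_trans hrm hl) h2ϑ.le
      _ ≤ ((2:ℝ) ^ ϑ + 2) * ell ϑ (lam * t) := by
          have := (ell_pos (ϑ := ϑ) hr).le
          nlinarith

set_option maxHeartbeats 1000000 in
/-- for `ϑ ≥ 0` and `γ < 1` there is `C > 0` such that for all `λ, t > 0`,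
`∫₀^t min((λ(t-s))^{-ϑ},1) s^{-γ} ds ≤ C ℓ_ϑ(λt) t^{1-γ}`. -/
theorem stmt_3 (ϑ γ : ℝ) (hϑ : 0 ≤ ϑ) (hγ : γ < 1) :
    ∃ C : ℝ, 0 < C ∧ ∀ lam t : ℝ, 0 < lam → 0 < t →
      (∫⁻ s in Set.Ioo (0 : ℝ) t,
        ENNReal.ofReal (min ((lam * (t - s)) ^ (-ϑ)) 1 * s ^ (-γ))) ≤
      ENNReal.ofReal (C * ell ϑ (lam * t) * t ^ (1 - γ)) := by
  obtain ⟨C₀, hC₀, hcore⟩ := core ϑ hϑ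
  have h1γ : (0:ℝ) < 1 - γ := by linarith
  have h2γ : (0:ℝ) < (2:ℝ) ^ γ := Real.rpow_pos_of_pos two_pos _
  have h2ϑ : (0:ℝ) < (2:ℝ) ^ ϑ := Real.rpow_pos_of_pos two_pos _
  refine ⟨((2:ℝ) ^ ϑ + 2) / (1 - γ) + ((2:ℝ) ^ γ + 1) * C₀, by positivity,
    fun lam t hlam ht => ?_⟩
  set M : ℝ := (2:ℝ) ^ γ + 1 with hMdef
  set A : ℝ := min ((lam * (t / 2)) ^ (-ϑ)) 1 with hAdef
  have hr : 0 < lam * t := mul_pos hlam ht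
  have hA0 : 0 ≤ A := le_min (Real.rpow_nonneg (by positivity) _) zero_le_one
  have hM0 : (0:ℝ) < M := by positivity
  have htγ : (0:ℝ) ≤ t ^ (-γ) := Real.rpow_nonneg ht.le _
  have hℓ : 0 < ell ϑ (lam * t) := ell_pos hr
  -- pointwise bound
  have hpt : ∀ s ∈ Set.Ioo (0:ℝ) t,
      ENNReal.ofReal (min ((lam * (t - s)) ^ (-ϑ)) 1 * s ^ (-γ)) ≤
        ENNReal.ofReal (A * s ^ (-γ)) +
          ENNReal.ofReal (M * t ^ (-γ) * min ((lam * (t - s)) ^ (-ϑ)) 1) := by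
    intro s hs
    have hs0 : 0 < s := hs.1
    have hts : 0 < t - s := by linarith [hs.2]
    have hsn : (0:ℝ) ≤ s ^ (-γ) := Real.rpow_nonneg hs0.le _
    have hmn : (0:ℝ) ≤ min ((lam * (t - s)) ^ (-ϑ)) 1 :=
      le_min (Real.rpow_nonneg (by positivity) _) zero_le_one
    rw [← ENNReal.ofReal_add (mul_nonneg hA0 hsn)
      (mul_nonneg (mul_nonneg hM0.le htγ) hmn)]
    apply ENNReal.ofReal_le_ofReal
    by_cases hhalf : s ≤ t / 2
    · have hb : min ((lam * (t - s)) ^ (-ϑ)) 1 ≤ A := by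
        rw [hAdef]
        exact min_le_min (rpow_anti hϑ (by positivity) (by nlinarith)) le_rfl
      nlinarith [mul_le_mul_of_nonneg_right hb hsn,
        mul_nonneg (mul_nonneg hM0.le htγ) hmn]
    · push_neg at hhalf
      have hsb : s ^ (-γ) ≤ M * t ^ (-γ) := by
        rcases le_or_gt 0 γ with hγ0 | hγ0
        · have h1 : s ^ (-γ) ≤ (t / 2) ^ (-γ) := rpow_anti hγ0 (by positivity) hhalf.le
          have h2 : (t / 2) ^ (-γ) = 2 ^ γ * t ^ (-γ) := by
            rw [Real.div_rpow ht.le (by norm_num : (0:ℝ) ≤ 2),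
              Real.rpow_neg (by norm_num : (0:ℝ) ≤ 2), div_eq_mul_inv, inv_inv, mul_comm]
          have h3 : (2:ℝ) ^ γ * t ^ (-γ) ≤ M * t ^ (-γ) :=
            mul_le_mul_of_nonneg_right (by rw [hMdef]; linarith) htγ
          linarith
        · have h1 : s ^ (-γ) ≤ t ^ (-γ) :=
            Real.rpow_le_rpow hs0.le hs.2.le (by linarith)
          have h3 : (1:ℝ) * t ^ (-γ) ≤ M * t ^ (-γ) :=
            mul_le_mul_of_nonneg_right (by rw [hMdef]; linarith) htγ
          linarith [one_mul (t ^ (-γ))]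
      nlinarith [mul_le_mul_of_nonneg_left hsb hmn, mul_nonneg hA0 hsn]
  -- fun_prop
  have hinm : Measurable fun s : ℝ => ENNReal.ofReal (min ((lam * (t - s)) ^ (-ϑ)) 1) := by
    fun_prop
  have hf1m : Measurable fun s : ℝ => ENNReal.ofReal (A * s ^ (-γ)) := by
    fun_prop
  have hf2m : Measurable fun s : ℝ =>
      ENNReal.ofReal (M * t ^ (-γ) * min ((lam * (t - s)) ^ (-ϑ)) 1) := by
    fun_prop
  -- assemble
  have step1 : (∫⁻ s in Set.Ioo (0 : ℝ) t,
        ENNReal.ofReal (min ((lam * (t - s)) ^ (-ϑ)) 1 * s ^ (-γ))) ≤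
      (∫⁻ s in Set.Ioo (0 : ℝ) t, ENNReal.ofReal (A * s ^ (-γ))) +
        ∫⁻ s in Set.Ioo (0 : ℝ) t,
          ENNReal.ofReal (M * t ^ (-γ) * min ((lam * (t - s)) ^ (-ϑ)) 1) := by
    rw [← lintegral_add_left hf1m]
    exact setLIntegral_mono (hf1m.add hf2m) hpt
  have hI1 : (∫⁻ s in Set.Ioo (0 : ℝ) t, ENNReal.ofReal (A * s ^ (-γ))) =
      ENNReal.ofReal A * ENNReal.ofReal (t ^ (1 - γ) / (1 - γ)) := by
    simp_rw [ENNReal.ofReal_mul hA0]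
    rw [lintegral_const_mul _ (by fun_prop), lint_rpow hγ ht]
  have hI2 : (∫⁻ s in Set.Ioo (0 : ℝ) t,
        ENNReal.ofReal (M * t ^ (-γ) * min ((lam * (t - s)) ^ (-ϑ)) 1)) ≤
      ENNReal.ofReal (M * t ^ (-γ)) * ENNReal.ofReal (C₀ * t * ell ϑ (lam * t)) := by
    simp_rw [ENNReal.ofReal_mul (mul_nonneg hM0.le htγ)]
    rw [lintegral_const_mul _ hinm,
      lint_reflect t (fun u => ENNReal.ofReal (min ((lam * u) ^ (-ϑ)) 1))]
    exact mul_le_mul_right (hcore lam t hlam ht) _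
  have htt : t ^ (-γ) * t = t ^ (1 - γ) := by
    nth_rewrite 2 [← Real.rpow_one t]
    rw [← Real.rpow_add ht, show -γ + 1 = 1 - γ by ring]
  have htpos : (0:ℝ) < t ^ (1 - γ) := Real.rpow_pos_of_pos ht _
  have hreal : A * (t ^ (1 - γ) / (1 - γ)) + M * t ^ (-γ) * (C₀ * t * ell ϑ (lam * t)) ≤
      (((2:ℝ) ^ ϑ + 2) / (1 - γ) + M * C₀) * ell ϑ (lam * t) * t ^ (1 - γ) := by
    have hA : A ≤ ((2:ℝ) ^ ϑ + 2) * ell ϑ (lam * t) := A_le hϑ hlam ht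
    have e : M * t ^ (-γ) * (C₀ * t * ell ϑ (lam * t)) =
        M * C₀ * ell ϑ (lam * t) * t ^ (1 - γ) := by rw [← htt]; ring
    rw [e]
    have h4 : A * (t ^ (1 - γ) / (1 - γ)) ≤
        ((2:ℝ) ^ ϑ + 2) * ell ϑ (lam * t) * (t ^ (1 - γ) / (1 - γ)) :=
      mul_le_mul_of_nonneg_right hA (by positivity)
    have h5 : ((2:ℝ) ^ ϑ + 2) * ell ϑ (lam * t) * (t ^ (1 - γ) / (1 - γ)) =
        ((2:ℝ) ^ ϑ + 2) / (1 - γ) * ell ϑ (lam * t) * t ^ (1 - γ) := by ring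
    linarith [h4, h5.le]
  calc (∫⁻ s in Set.Ioo (0 : ℝ) t,
        ENNReal.ofReal (min ((lam * (t - s)) ^ (-ϑ)) 1 * s ^ (-γ)))
      ≤ ENNReal.ofReal A * ENNReal.ofReal (t ^ (1 - γ) / (1 - γ)) +
          ENNReal.ofReal (M * t ^ (-γ)) * ENNReal.ofReal (C₀ * t * ell ϑ (lam * t)) :=
        step1.trans (add_le_add hI1.le hI2)
    _ = ENNReal.ofReal (A * (t ^ (1 - γ) / (1 - γ)) +
          M * t ^ (-γ) * (C₀ * t * ell ϑ (lam * t))) := by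
        rw [← ENNReal.ofReal_mul hA0, ← ENNReal.ofReal_mul (mul_nonneg hM0.le htγ),
          ← ENNReal.ofReal_add (mul_nonneg hA0 (by positivity))
            (mul_nonneg (mul_nonneg hM0.le htγ)
              (mul_nonneg (mul_nonneg hC₀.le ht.le) hℓ.le))]
    _ ≤ ENNReal.ofReal ((((2:ℝ) ^ ϑ + 2) / (1 - γ) + M * C₀) * ell ϑ (lam * t) *
          t ^ (1 - γ)) := ENNReal.ofReal_le_ofReal hreal
end

section
/- Fix α ∈ (0,2], an integer d ≥ 1, integers j, ℓ ≥ 1 and t > 0 with ℓ ∉ Θ^t_j. Let f, g : ℝ^{2d} → ℂ be Schwartz functions such that the Fourier transform of f is supported in the anisotropic annulus {ξ ∈ ℝ^{2d} : 2^{j−1} ≤ |ξ|_a ≤ 2^{j+1}} and the Fourier transform of g is supported in {ξ ∈ ℝ^{2d} : 2^{ℓ−1} ≤ |ξ|_a ≤ 2^{ℓ+1}}. Then ∫_{ℝ^{2d}} f(x,v) · g(x − tv, v) dx dv = 0. -/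
open MeasureTheory
open scoped RealInnerProductSpace FourierTransform Real

/-- The Fourier transform of a function on `ℝ^d × ℝ^d` (phase space), with the
standard convention `f̂(ξ) = ∫ e^{-i z·ξ} f(z) dz`. -/
noncomputable def fourier2 {d : ℕ}
    (f : EuclideanSpace ℝ (Fin d) × EuclideanSpace ℝ (Fin d) → ℂ)
    (ξ : EuclideanSpace ℝ (Fin d) × EuclideanSpace ℝ (Fin d)) : ℂ :=
  ∫ z : EuclideanSpace ℝ (Fin d) × EuclideanSpace ℝ (Fin d),
    Complex.exp (-(Complex.I *
      ((((inner ℝ z.1 ξ.1 : ℝ) + (inner ℝ z.2 ξ.2 : ℝ) : ℝ) : ℂ)))) * f z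

/-- The anisotropic quasi-norm `|ξ|_a = |ξ₁|^{1/(1+α)} + |ξ₂|` on `ℝ^d × ℝ^d`. -/
noncomputable def anorm (α : ℝ) {d : ℕ}
    (ξ : EuclideanSpace ℝ (Fin d) × EuclideanSpace ℝ (Fin d)) : ℝ :=
  ‖ξ.1‖ ^ (1 / (1 + α)) + ‖ξ.2‖

noncomputable section

namespace Stmt4Aux

variable {d : ℕ}

abbrev EV (d : ℕ) := EuclideanSpace ℝ (Fin d) × EuclideanSpace ℝ (Fin d)
abbrev EW (d : ℕ) := EuclideanSpace ℝ (Fin d ⊕ Fin d)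

instance : Measure.IsAddHaarMeasure (volume : Measure (EV d)) :=
  Measure.prod.instIsAddHaarMeasure (volume : Measure (EuclideanSpace ℝ (Fin d))) volume

/-- linear equiv between pair of pi types and pi over sum -/
def sumPiL (d : ℕ) : ((Fin d → ℝ) × (Fin d → ℝ)) ≃ₗ[ℝ] (Fin d ⊕ Fin d → ℝ) where
  toFun p := Sum.elim p.1 p.2
  invFun f := (fun i => f (.inl i), fun i => f (.inr i))
  left_inv p := rfl
  right_inv f := by funext i; cases i <;> rfl
  map_add' p q := by funext i; cases i <;> rfl
  map_smul' c p := by funext i; cases i <;> rfl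

def psi (d : ℕ) : EV d ≃L[ℝ] EW d :=
  (((EuclideanSpace.equiv (Fin d) ℝ).prodCongr (EuclideanSpace.equiv (Fin d) ℝ)).trans
    ((sumPiL d).toContinuousLinearEquiv)).trans (EuclideanSpace.equiv (Fin d ⊕ Fin d) ℝ).symm

lemma psi_apply_inl (p : EV d) (i : Fin d) : psi d p (.inl i) = p.1 i := rfl
lemma psi_apply_inr (p : EV d) (i : Fin d) : psi d p (.inr i) = p.2 i := rfl

lemma psi_inner (p q : EV d) :
    ⟪psi d p, psi d q⟫ = ⟪p.1, q.1⟫ + ⟪p.2, q.2⟫ := by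
  simp only [PiLp.inner_apply, RCLike.inner_apply, starRingEnd_apply, star_trivial]
  rw [Fintype.sum_sum_type]
  rfl

lemma psi_measurePreserving (d : ℕ) : MeasurePreserving (⇑(psi d)) volume volume := by
  have h1 : MeasurePreserving
      (Prod.map (⇑(MeasurableEquiv.toLp 2 (Fin d → ℝ)).symm) (⇑(MeasurableEquiv.toLp 2 (Fin d → ℝ)).symm))
      (volume : Measure (EV d))
      ((Measure.pi fun _ : Fin d => volume).prod (Measure.pi fun _ : Fin d => volume)) :=
    (EuclideanSpace.volume_preserving_symm_measurableEquiv_toLp (Fin d)).prod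
      (EuclideanSpace.volume_preserving_symm_measurableEquiv_toLp (Fin d))
  have h2 := measurePreserving_sumPiEquivProdPi_symm (fun _ : Fin d ⊕ Fin d => (volume : Measure ℝ))
  have h3 := (EuclideanSpace.volume_preserving_symm_measurableEquiv_toLp (Fin d ⊕ Fin d)).symm
  have hcomp := h3.comp (h2.comp h1)
  have : (⇑(MeasurableEquiv.toLp 2 (Fin d ⊕ Fin d → ℝ)).symm.symm ∘
      ⇑(MeasurableEquiv.sumPiEquivProdPi fun _ : Fin d ⊕ Fin d => ℝ).symm ∘
      (Prod.map (⇑(MeasurableEquiv.toLp 2 (Fin d → ℝ)).symm) (⇑(MeasurableEquiv.toLp 2 (Fin d → ℝ)).symm)))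
      = ⇑(psi d) := by
    funext p
    ext i
    cases i <;> rfl
  rwa [this] at hcomp

end Stmt4Aux

namespace Stmt4Aux2
open Stmt4Aux

variable {d : ℕ}

def Lform (d : ℕ) : EV d →ₗ[ℝ] EV d →ₗ[ℝ] ℝ :=
  LinearMap.compl₁₂ (innerₗ (EW d)) (psi d).toLinearEquiv.toLinearMap
    (psi d).toLinearEquiv.toLinearMap

lemma Lform_apply (z ξ : EV d) : Lform d z ξ = ⟪psi d z, psi d ξ⟫ := rfl

lemma Lform_apply' (z ξ : EV d) : Lform d z ξ = ⟪z.1, ξ.1⟫ + ⟪z.2, ξ.2⟫ := by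
  rw [Lform_apply, psi_inner]

lemma Lform_continuous (d : ℕ) : Continuous fun p : EV d × EV d => Lform d p.1 p.2 := by
  simp only [Lform_apply]
  exact continuous_inner.comp ((psi d).continuous.prodMap (psi d).continuous)

lemma Lform_flip (d : ℕ) : (Lform d).flip = Lform d := by
  apply LinearMap.ext; intro z; apply LinearMap.ext; intro ξ
  simp only [LinearMap.flip_apply, Lform_apply]
  exact real_inner_comm _ _

def FT (φ : EV d → ℂ) : EV d → ℂ :=
  VectorFourier.fourierIntegral Real.fourierChar volume (Lform d) φ

lemma FT_eq_fourier2 (φ : EV d → ℂ) (ξ : EV d) :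
    FT φ ξ = fourier2 φ ((2 * Real.pi) • ξ) := by
  unfold FT fourier2 VectorFourier.fourierIntegral
  congr 1
  funext z
  rw [Circle.smul_def, Real.fourierChar_apply, Lform_apply' (d := d) z ξ]
  congr 1
  have h1 : (inner ℝ z.1 ((2 * Real.pi) • ξ).1 : ℝ) = (2 * Real.pi) * ⟪z.1, ξ.1⟫ :=
    real_inner_smul_right _ _ _
  have h2 : (inner ℝ z.2 ((2 * Real.pi) • ξ).2 : ℝ) = (2 * Real.pi) * ⟪z.2, ξ.2⟫ :=
    real_inner_smul_right _ _ _
  rw [h1, h2]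
  push_cast
  ring_nf

lemma FT_transfer (φ : EV d → ℂ) (ξ : EV d) :
    𝓕 (fun w => φ ((psi d).symm w)) (psi d ξ) = FT φ ξ := by
  rw [Real.fourier_eq]
  unfold FT VectorFourier.fourierIntegral
  rw [← MeasurePreserving.integral_comp (psi_measurePreserving d)
    (psi d).toHomeomorph.measurableEmbedding]
  congr 1

end Stmt4Aux2

namespace Stmt4Aux3
open Stmt4Aux Stmt4Aux2

variable {d : ℕ}

def shear (d : ℕ) (t : ℝ) : EV d ≃ₗ[ℝ] EV d where
  toFun z := (z.1 - t • z.2, z.2)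
  invFun z := (z.1 + t • z.2, z.2)
  left_inv z := by refine Prod.ext ?_ rfl; dsimp; abel
  right_inv z := by refine Prod.ext ?_ rfl; dsimp; abel
  map_add' a b := by refine Prod.ext ?_ rfl; dsimp; rw [smul_add]; abel
  map_smul' c z := by
    refine Prod.ext ?_ rfl
    dsimp
    rw [smul_sub, smul_comm c t]

def shearCLE (d : ℕ) (t : ℝ) : EV d ≃L[ℝ] EV d := (shear d t).toContinuousLinearEquiv

lemma shearCLE_apply (t : ℝ) (z : EV d) : shearCLE d t z = (z.1 - t • z.2, z.2) := rfl

lemma phase_shear (t : ℝ) (ξ : EV d) (x v : EuclideanSpace ℝ (Fin d)) :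
    Lform d (x + t • v, v) ξ = Lform d (x, v) (ξ.1, ξ.2 + t • ξ.1) := by
  rw [Lform_apply', Lform_apply']
  simp only [inner_add_left, inner_add_right, real_inner_smul_left, real_inner_smul_right]
  ring

lemma FT_comp_shear (t : ℝ) (g : SchwartzMap (EV d) ℂ) (ξ : EV d) :
    FT (fun z : EV d => g (z.1 - t • z.2, z.2)) ξ = FT ⇑g (ξ.1, ξ.2 + t • ξ.1) := by
  set G : SchwartzMap (EV d) ℂ :=
    SchwartzMap.compCLMOfContinuousLinearEquiv ℝ (shearCLE d t) g with hG
  have hGfun : (fun z : EV d => g (z.1 - t • z.2, z.2)) = ⇑G := rfl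
  have h₁ : Integrable (fun z : EV d => Real.fourierChar (-(Lform d z ξ)) • G z)
      ((volume : Measure (EuclideanSpace ℝ (Fin d))).prod volume) := by
    rw [← Measure.volume_eq_prod]
    exact (VectorFourier.fourierIntegral_convergent_iff Real.continuous_fourierChar
      (Lform_continuous d) ξ).2 G.integrable
  have h₂ : Integrable (fun z : EV d =>
      Real.fourierChar (-(Lform d z (ξ.1, ξ.2 + t • ξ.1))) • g z)
      ((volume : Measure (EuclideanSpace ℝ (Fin d))).prod volume) := by
    rw [← Measure.volume_eq_prod]
    exact (VectorFourier.fourierIntegral_convergent_iff Real.continuous_fourierChar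
      (Lform_continuous d) _).2 g.integrable
  unfold FT VectorFourier.fourierIntegral
  rw [hGfun]
  rw [Measure.volume_eq_prod]
  rw [integral_prod_symm _ h₁, integral_prod_symm _ h₂]
  congr 1
  funext v
  calc (∫ x, Real.fourierChar (-(Lform d (x, v) ξ)) • G (x, v))
      = ∫ x, Real.fourierChar (-(Lform d (x + t • v, v) ξ)) • G (x + t • v, v) :=
        (integral_add_right_eq_self
          (fun x => Real.fourierChar (-(Lform d (x, v) ξ)) • G (x, v)) (t • v)).symm
    _ = ∫ x, Real.fourierChar (-(Lform d (x, v) (ξ.1, ξ.2 + t • ξ.1))) • g (x, v) := by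
        refine congrArg (integral volume) (funext fun x => ?_)
        have hGx : G (x + t • v, v) = g (x, v) := by
          show g ((x + t • v) - t • v, v) = g (x, v)
          rw [add_sub_cancel_right]
        rw [phase_shear, hGx]

end Stmt4Aux3

namespace Stmt4Arith

lemma rpow_collapse {u v : ℝ} : (2:ℝ) ^ u * (2:ℝ) ^ v = (2:ℝ) ^ (u + v) :=
  (Real.rpow_add two_pos u v).symm

lemma rpow_le_rpow_exp {u v : ℝ} (h : u ≤ v) : (2:ℝ) ^ u ≤ (2:ℝ) ^ v :=
  Real.rpow_le_rpow_left_iff one_lt_two |>.mpr h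

lemma half_step {α t x b c : ℝ} {j ℓ : ℕ} (hα : 0 < α) (ht : 0 < t)
    (hx : 0 ≤ x) (hb : 0 ≤ b) (hc : 0 ≤ c)
    (hbc : c ≤ b + t * x)
    (h2 : x ^ (1 / (1 + α)) + b ≤ (2:ℝ) ^ ((j:ℝ) + 1))
    (h3 : (2:ℝ) ^ ((ℓ:ℝ) - 1) ≤ x ^ (1 / (1 + α)) + c) :
    (2:ℝ) ^ (ℓ:ℝ) ≤ (2:ℝ) ^ (α + 2) * ((2:ℝ) ^ (j:ℝ) + t * (2:ℝ) ^ ((j:ℝ) * (1 + α))) := by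
  set a : ℝ := x ^ (1 / (1 + α)) with ha
  have h1α : (0:ℝ) < 1 + α := by linarith
  have ha0 : 0 ≤ a := Real.rpow_nonneg hx _
  have hax : a ^ (1 + α) = x := by
    rw [ha, ← Real.rpow_mul hx, one_div_mul_cancel (ne_of_gt h1α), Real.rpow_one]
  have haj : a ≤ (2:ℝ) ^ ((j:ℝ) + 1) := by linarith
  have hxj : x ≤ (2:ℝ) ^ (((j:ℝ) + 1) * (1 + α)) := by
    rw [← hax]
    calc a ^ (1 + α) ≤ ((2:ℝ) ^ ((j:ℝ) + 1)) ^ (1 + α) :=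
          Real.rpow_le_rpow ha0 haj h1α.le
      _ = (2:ℝ) ^ (((j:ℝ) + 1) * (1 + α)) := (Real.rpow_mul (by norm_num) _ _).symm
  have e1 : (2:ℝ) ^ (ℓ:ℝ) = 2 * (2:ℝ) ^ ((ℓ:ℝ) - 1) := by
    rw [show (2:ℝ) * (2:ℝ) ^ ((ℓ:ℝ) - 1) = (2:ℝ) ^ (1:ℝ) * (2:ℝ) ^ ((ℓ:ℝ) - 1) by
      norm_num, rpow_collapse]
    congr 1
    ring
  have e2 : 2 * (2:ℝ) ^ ((j:ℝ) + 1) ≤ (2:ℝ) ^ (α + 2) * (2:ℝ) ^ (j:ℝ) := by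
    have h2j : 2 * (2:ℝ) ^ ((j:ℝ) + 1) = (2:ℝ) ^ (1 + ((j:ℝ) + 1)) := by
      rw [show (2:ℝ) * (2:ℝ) ^ ((j:ℝ) + 1) = (2:ℝ) ^ (1:ℝ) * (2:ℝ) ^ ((j:ℝ) + 1) by
        norm_num, rpow_collapse]
    rw [h2j, rpow_collapse]
    exact rpow_le_rpow_exp (by linarith)
  have e3 : 2 * (2:ℝ) ^ (((j:ℝ) + 1) * (1 + α)) = (2:ℝ) ^ (α + 2) * (2:ℝ) ^ ((j:ℝ) * (1 + α)) := by
    rw [show (2:ℝ) * (2:ℝ) ^ (((j:ℝ) + 1) * (1 + α))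
        = (2:ℝ) ^ (1:ℝ) * (2:ℝ) ^ (((j:ℝ) + 1) * (1 + α)) by norm_num,
      rpow_collapse, rpow_collapse]
    congr 1
    ring
  have htx : t * x ≤ t * (2:ℝ) ^ (((j:ℝ) + 1) * (1 + α)) := mul_le_mul_of_nonneg_left hxj ht.le
  have h5 : 2 * (t * (2:ℝ) ^ (((j:ℝ) + 1) * (1 + α)))
      = t * ((2:ℝ) ^ (α + 2) * (2:ℝ) ^ ((j:ℝ) * (1 + α))) := by
    rw [← e3]; ring
  have htarget : (2:ℝ) ^ (α + 2) * ((2:ℝ) ^ (j:ℝ) + t * (2:ℝ) ^ ((j:ℝ) * (1 + α)))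
      = (2:ℝ) ^ (α + 2) * (2:ℝ) ^ (j:ℝ) + t * ((2:ℝ) ^ (α + 2) * (2:ℝ) ^ ((j:ℝ) * (1 + α))) := by
    ring
  linarith

end Stmt4Arith

open Stmt4Aux Stmt4Aux2 Stmt4Aux3 in
/-- if `ℓ ∉ Θ^t_j` and the Fourier transforms of the Schwartz functions
`f` and `g` are supported in the anisotropic annuli of radii `2^{j±1}` and `2^{ℓ±1}`
respectively, then `∫ f(x,v) g(x - tv, v) dx dv = 0`. -/
theorem stmt_4 (α : ℝ) (hα : α ∈ Set.Ioc (0 : ℝ) 2) (d : ℕ) (hd : 1 ≤ d)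
    (j ℓ : ℕ) (hj : 1 ≤ j) (hℓ : 1 ≤ ℓ) (t : ℝ) (ht : 0 < t)
    (hnot : ¬ (((2 : ℝ) ^ (ℓ : ℝ) ≤
        (2 : ℝ) ^ (α + 2) * ((2 : ℝ) ^ (j : ℝ) + t * (2 : ℝ) ^ ((j : ℝ) * (1 + α)))) ∧
      ((2 : ℝ) ^ (j : ℝ) ≤
        (2 : ℝ) ^ (α + 2) * ((2 : ℝ) ^ (ℓ : ℝ) + t * (2 : ℝ) ^ ((ℓ : ℝ) * (1 + α))))))
    (f g : SchwartzMap (EuclideanSpace ℝ (Fin d) × EuclideanSpace ℝ (Fin d)) ℂ)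
    (hf : Function.support (fourier2 ⇑f) ⊆
      {ξ | (2 : ℝ) ^ ((j : ℝ) - 1) ≤ anorm α ξ ∧ anorm α ξ ≤ (2 : ℝ) ^ ((j : ℝ) + 1)})
    (hg : Function.support (fourier2 ⇑g) ⊆
      {ξ | (2 : ℝ) ^ ((ℓ : ℝ) - 1) ≤ anorm α ξ ∧ anorm α ξ ≤ (2 : ℝ) ^ ((ℓ : ℝ) + 1)}) :
    (∫ z : EuclideanSpace ℝ (Fin d) × EuclideanSpace ℝ (Fin d),
      f z * g (z.1 - t • z.2, z.2)) = 0 := by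
  obtain ⟨hα0, hα2⟩ := hα
  set h : SchwartzMap (EV d) ℂ :=
    SchwartzMap.compCLMOfContinuousLinearEquiv ℝ (shearCLE d t) g with hh
  set f' : SchwartzMap (EW d) ℂ :=
    SchwartzMap.compCLMOfContinuousLinearEquiv ℝ (psi d).symm f with hf'
  set w' : SchwartzMap (EW d) ℂ := (SchwartzMap.fourierTransformCLE ℝ (SchwartzMap (EW d) ℂ)).symm f' with hw'
  set u : SchwartzMap (EV d) ℂ :=
    SchwartzMap.compCLMOfContinuousLinearEquiv ℝ (psi d) w' with hu
  have hf'fun : (fun w => f ((psi d).symm w)) = ⇑f' := rfl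
  have hFTu : ∀ ξ : EV d, FT ⇑u ξ = f ξ := by
    intro ξ
    rw [← FT_transfer]
    have h1 : (fun w => u ((psi d).symm w)) = ⇑w' := by
      funext w
      show w' (psi d ((psi d).symm w)) = w' w
      rw [(psi d).apply_symm_apply]
    rw [h1]
    have h2 : 𝓕 ⇑w' = ⇑f' := by
      have h3 := (SchwartzMap.fourierTransformCLE ℝ (SchwartzMap (EW d) ℂ)).apply_symm_apply f'
      calc 𝓕 ⇑w' = ⇑(SchwartzMap.fourierTransformCLE ℝ (SchwartzMap (EW d) ℂ) w') :=
            congrArg (fun F : SchwartzMap (EW d) ℂ => (⇑F : EW d → ℂ)) (SchwartzMap.fourierTransformCLE_apply (R := ℝ) w').symm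
        _ = ⇑f' := by rw [hw', h3]
    show 𝓕 ⇑w' (psi d ξ) = f ξ
    rw [h2]
    show f ((psi d).symm (psi d ξ)) = f ξ
    rw [(psi d).symm_apply_apply]
  have hu_eq : ∀ ξ : EV d, u ξ = FT ⇑f (-ξ) := by
    intro ξ
    calc u ξ = w' (psi d ξ) := rfl
      _ = 𝓕⁻ ⇑f' (psi d ξ) := by
          rw [hw']
          exact congrFun (SchwartzMap.fourierInv_coe f') (psi d ξ)
      _ = 𝓕 ⇑f' (-(psi d ξ)) := Real.fourierInv_eq_fourier_neg _ _
      _ = 𝓕 ⇑f' (psi d (-ξ)) := by rw [map_neg]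
      _ = FT ⇑f (-ξ) := by rw [← hf'fun]; exact FT_transfer ⇑f (-ξ)
  have mult := VectorFourier.integral_fourierIntegral_smul_eq_flip (μ := (volume : Measure (EV d))) (ν := (volume : Measure (EV d))) (L := Lform d)
      Real.continuous_fourierChar (Lform_continuous d) u.integrable h.integrable
  rw [Lform_flip] at mult
  have mult' : (∫ ξ : EV d, FT ⇑u ξ • h ξ) = ∫ x : EV d, u x • FT ⇑h x := mult
  have goal_eq : (∫ z : EV d, f z * g (z.1 - t • z.2, z.2))
      = ∫ ξ : EV d, FT ⇑u ξ • h ξ := by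
    refine congrArg (integral volume) (funext fun z => ?_)
    rw [hFTu z]
    show f z * g (z.1 - t • z.2, z.2) = f z • h z
    rw [smul_eq_mul]
    rfl
  rw [goal_eq, mult']
  have hzero : ∀ x : EV d, u x • FT ⇑h x = (0:ℂ) := by
    intro x
    by_contra hne
    have hu0 : u x ≠ 0 := fun h0 => hne (by rw [h0, zero_smul])
    have hF0 : FT ⇑h x ≠ 0 := fun h0 => hne (by rw [h0, smul_zero])
    have hFTh : FT ⇑h x = FT ⇑g (x.1, x.2 + t • x.1) := by
      have hhfun : ⇑h = fun z : EV d => g (z.1 - t • z.2, z.2) := rfl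
      rw [hhfun]
      exact FT_comp_shear t g x
    have hfne : fourier2 ⇑f ((2 * Real.pi) • (-x)) ≠ 0 := by
      intro h0
      apply hu0
      rw [hu_eq x, FT_eq_fourier2]
      exact h0
    have hgne : fourier2 ⇑g ((2 * Real.pi) • ((x.1, x.2 + t • x.1) : EV d)) ≠ 0 := by
      intro h0
      apply hF0
      rw [hFTh, FT_eq_fourier2]
      exact h0
    have hfmem := hf hfne
    have hgmem := hg hgne
    simp only [Set.mem_setOf_eq] at hfmem hgmem
    -- rewrite the anorms
    have hanf : anorm α ((2 * Real.pi) • (-x))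
        = ‖(2 * Real.pi) • x.1‖ ^ (1 / (1 + α)) + ‖(2 * Real.pi) • x.2‖ := by
      simp [anorm, norm_neg]
    have hang : anorm α ((2 * Real.pi) • ((x.1, x.2 + t • x.1) : EV d))
        = ‖(2 * Real.pi) • x.1‖ ^ (1 / (1 + α))
          + ‖(2 * Real.pi) • x.2 + t • ((2 * Real.pi) • x.1)‖ := by
      simp only [anorm, Prod.smul_fst, Prod.smul_snd, smul_add]
      rw [smul_comm (2 * Real.pi) t]
    rw [hanf] at hfmem
    rw [hang] at hgmem
    set X : ℝ := ‖(2 * Real.pi) • x.1‖ with hX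
    set B : ℝ := ‖(2 * Real.pi) • x.2‖ with hB
    set C : ℝ := ‖(2 * Real.pi) • x.2 + t • ((2 * Real.pi) • x.1)‖ with hC
    have hX0 : 0 ≤ X := norm_nonneg _
    have hB0 : 0 ≤ B := norm_nonneg _
    have hC0 : 0 ≤ C := norm_nonneg _
    have htX : ‖t • ((2 * Real.pi) • x.1)‖ = t * X := by
      rw [norm_smul, Real.norm_eq_abs, abs_of_pos ht]
    have hbc : C ≤ B + t * X := by
      rw [hC, ← htX]
      exact norm_add_le _ _
    have hcb : B ≤ C + t * X := by
      have : (2 * Real.pi) • x.2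
          = ((2 * Real.pi) • x.2 + t • ((2 * Real.pi) • x.1)) - t • ((2 * Real.pi) • x.1) := by
        abel
      rw [hB, this, ← htX]
      exact norm_sub_le _ _
    exact hnot ⟨Stmt4Arith.half_step hα0 ht hX0 hB0 hC0 hbc hfmem.2 hgmem.1,
      Stmt4Arith.half_step hα0 ht hX0 hC0 hB0 hcb hgmem.2 hfmem.1⟩
  calc (∫ x : EV d, u x • FT ⇑h x) = ∫ _ : EV d, (0:ℂ) :=
        congrArg (integral volume) (funext hzero)
    _ = 0 := integral_zero _ _
end
end

section
/- Fix α ∈ (0,2] and β ∈ ℝ with β ≠ 0. Then there exists a constant C = C(α, β) > 0 such that for every t > 0 and every integer j ≥ 1, Σ_{ℓ ∈ Θ^t_j} 2^{−ℓβ} ≤ C · 2^{−jβ} · (1 + t·2^{jα})^{|β|}. -/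
open Real

private lemma stmt5_flip {x y c : ℝ} (h : (2:ℝ) ^ y ≤ c * (2:ℝ) ^ x) :
    (2:ℝ) ^ (-x) ≤ c * (2:ℝ) ^ (-y) := by
  have h1 : (0:ℝ) < (2:ℝ) ^ x := rpow_pos_of_pos two_pos x
  have h2 : (0:ℝ) < (2:ℝ) ^ y := rpow_pos_of_pos two_pos y
  rw [rpow_neg (by norm_num), rpow_neg (by norm_num), ← one_div, ← div_eq_mul_inv,
    div_le_div_iff₀ h1 h2]
  linarith

/-- for `α ∈ (0,2]` and `β ≠ 0` there is `C > 0` such that for every `t > 0`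
and every integer `j ≥ 1`, `∑_{ℓ ∈ Θ^t_j} 2^{-ℓβ} ≤ C 2^{-jβ} (1 + t 2^{jα})^{|β|}`. -/
theorem stmt_5 (α β : ℝ) (hα : α ∈ Set.Ioc (0 : ℝ) 2) (hβ : β ≠ 0) :
    ∃ C : ℝ, 0 < C ∧ ∀ t : ℝ, 0 < t → ∀ j : ℕ, 1 ≤ j →
      (∑' ℓ : ℕ,
        if ((2 : ℝ) ^ (ℓ : ℝ) ≤
              (2 : ℝ) ^ (α + 2) * ((2 : ℝ) ^ (j : ℝ) + t * (2 : ℝ) ^ ((j : ℝ) * (1 + α)))) ∧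
           ((2 : ℝ) ^ (j : ℝ) ≤
              (2 : ℝ) ^ (α + 2) * ((2 : ℝ) ^ (ℓ : ℝ) + t * (2 : ℝ) ^ ((ℓ : ℝ) * (1 + α))))
        then (2 : ℝ) ^ (-(ℓ : ℝ) * β) else 0) ≤
      C * (2 : ℝ) ^ (-(j : ℝ) * β) * (1 + t * (2 : ℝ) ^ ((j : ℝ) * α)) ^ |β| := by
  obtain ⟨hα0, hα2⟩ := hα
  have hb : 0 < |β| := abs_pos.mpr hβ
  set b := |β| with hbdef
  set r : ℝ := (2:ℝ) ^ (-b) with hrdef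
  have hr0 : 0 < r := rpow_pos_of_pos two_pos _
  have hr1 : r < 1 := by
    have h : (2:ℝ) ^ (-b) < (2:ℝ) ^ (0:ℝ) :=
      rpow_lt_rpow_of_exponent_lt one_lt_two (by linarith)
    rw [hrdef]
    simpa [rpow_zero] using h
  have h1r : 0 < 1 - r := by linarith
  have hK1 : (1:ℝ) ≤ (2:ℝ) ^ (α + 2) := by
    have h : (2:ℝ) ^ (0:ℝ) ≤ (2:ℝ) ^ (α + 2) :=
      rpow_le_rpow_of_exponent_le one_le_two (by linarith)
    simpa [rpow_zero] using h
  refine ⟨(2:ℝ) ^ ((α + 2) * b) * (1 - r)⁻¹, by positivity, ?_⟩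
  intro t ht j hj
  set K : ℝ := (2:ℝ) ^ (α + 2) with hKdef
  have hK0 : 0 < K := rpow_pos_of_pos two_pos _
  set M : ℝ := 1 + t * (2:ℝ) ^ ((j:ℝ) * α) with hMdef
  have hM1 : (1:ℝ) ≤ M := by
    have h : 0 < t * (2:ℝ) ^ ((j:ℝ) * α) := by positivity
    rw [hMdef]; linarith
  have hM0 : 0 < M := lt_of_lt_of_le one_pos hM1
  have hsplit : ∀ n : ℕ, (2:ℝ) ^ ((n:ℝ) * (1 + α)) = (2:ℝ) ^ (n:ℝ) * (2:ℝ) ^ ((n:ℝ) * α) := by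
    intro n
    rw [show (n:ℝ) * (1 + α) = (n:ℝ) + (n:ℝ) * α by ring, rpow_add two_pos]
  set B : ℝ := K * (2:ℝ) ^ (j:ℝ) * M with hBdef
  set A : ℝ := K * (2:ℝ) ^ (-(j:ℝ)) * M with hAdef
  have hA0 : 0 < A := by positivity
  have hB0 : 0 < B := by positivity
  -- the two structural bounds
  have hBle : ∀ ℓ : ℕ,
      (2:ℝ) ^ (ℓ:ℝ) ≤ K * ((2:ℝ) ^ (j:ℝ) + t * (2:ℝ) ^ ((j:ℝ) * (1 + α))) →
      (2:ℝ) ^ (ℓ:ℝ) ≤ B := by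
    intro ℓ h
    rw [hsplit j] at h
    calc (2:ℝ) ^ (ℓ:ℝ)
        ≤ K * ((2:ℝ) ^ (j:ℝ) + t * ((2:ℝ) ^ (j:ℝ) * (2:ℝ) ^ ((j:ℝ) * α))) := h
      _ = B := by rw [hBdef, hMdef]; ring
  have hAle : ∀ ℓ : ℕ,
      (2:ℝ) ^ (j:ℝ) ≤ K * ((2:ℝ) ^ (ℓ:ℝ) + t * (2:ℝ) ^ ((ℓ:ℝ) * (1 + α))) →
      (2:ℝ) ^ (-(ℓ:ℝ)) ≤ A := by
    intro ℓ hc2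
    rcases le_or_gt ℓ j with h | h
    · have h2 : (2:ℝ) ^ ((ℓ:ℝ) * α) ≤ (2:ℝ) ^ ((j:ℝ) * α) := by
        apply rpow_le_rpow_of_exponent_le one_le_two
        have hcast : (ℓ:ℝ) ≤ (j:ℝ) := Nat.cast_le.mpr h
        nlinarith
      have h3 : (2:ℝ) ^ (j:ℝ) ≤ (K * M) * (2:ℝ) ^ (ℓ:ℝ) := by
        rw [hsplit ℓ] at hc2
        have h5 : (0:ℝ) < (2:ℝ) ^ (ℓ:ℝ) := rpow_pos_of_pos two_pos _
        have h6 : t * (2:ℝ) ^ ((ℓ:ℝ) * α) ≤ t * (2:ℝ) ^ ((j:ℝ) * α) :=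
          mul_le_mul_of_nonneg_left h2 ht.le
        have h6' : (K * (2:ℝ) ^ (ℓ:ℝ)) * (t * (2:ℝ) ^ ((ℓ:ℝ) * α))
            ≤ (K * (2:ℝ) ^ (ℓ:ℝ)) * (t * (2:ℝ) ^ ((j:ℝ) * α)) :=
          mul_le_mul_of_nonneg_left h6 (by positivity)
        have h7 : K * ((2:ℝ) ^ (ℓ:ℝ) + t * ((2:ℝ) ^ (ℓ:ℝ) * (2:ℝ) ^ ((ℓ:ℝ) * α)))
            ≤ (K * M) * (2:ℝ) ^ (ℓ:ℝ) := by
          rw [hMdef]; nlinarith [h6']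
        linarith
      have h8 := stmt5_flip h3
      calc (2:ℝ) ^ (-(ℓ:ℝ)) ≤ K * M * (2:ℝ) ^ (-(j:ℝ)) := h8
        _ = A := by rw [hAdef]; ring
    · have h1 : (2:ℝ) ^ (-(ℓ:ℝ)) ≤ (2:ℝ) ^ (-(j:ℝ)) := by
        apply rpow_le_rpow_of_exponent_le one_le_two
        have hcast : (j:ℝ) ≤ (ℓ:ℝ) := Nat.cast_le.mpr h.le
        linarith
      have h5 : (0:ℝ) < (2:ℝ) ^ (-(j:ℝ)) := rpow_pos_of_pos two_pos _
      calc (2:ℝ) ^ (-(ℓ:ℝ)) ≤ (2:ℝ) ^ (-(j:ℝ)) := h1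
        _ = 1 * (2:ℝ) ^ (-(j:ℝ)) * 1 := by ring
        _ ≤ K * (2:ℝ) ^ (-(j:ℝ)) * M := by
            apply mul_le_mul (mul_le_mul hK1 le_rfl h5.le (by linarith)) hM1 one_pos.le
            positivity
        _ = A := by rw [hAdef]
  rcases hβ.lt_or_gt with hneg | hpos
  · -- case β < 0, so b = -β
    have hbeq : b = -β := by rw [hbdef]; exact abs_of_neg hneg
    set N' : ℕ := ⌊Real.logb 2 B⌋₊ with hN'def
    have hB1 : (1:ℝ) ≤ B := by
      have h2j : (1:ℝ) ≤ (2:ℝ) ^ (j:ℝ) := by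
        have h : (2:ℝ) ^ (0:ℝ) ≤ (2:ℝ) ^ (j:ℝ) :=
          rpow_le_rpow_of_exponent_le one_le_two (Nat.cast_nonneg j)
        simpa [rpow_zero] using h
      have hKj : (1:ℝ) ≤ K * (2:ℝ) ^ (j:ℝ) := by
        nlinarith [mul_le_mul hK1 h2j zero_le_one hK0.le]
      rw [hBdef]
      nlinarith [mul_le_mul hKj hM1 zero_le_one (le_trans zero_le_one hKj)]
    have hN'B : (2:ℝ) ^ ((N':ℝ)) ≤ B := by
      have h1 : (N':ℝ) ≤ Real.logb 2 B := Nat.floor_le (Real.logb_nonneg one_lt_two hB1)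
      calc (2:ℝ) ^ ((N':ℝ)) ≤ (2:ℝ) ^ (Real.logb 2 B) :=
            rpow_le_rpow_of_exponent_le one_le_two h1
        _ = B := Real.rpow_logb two_pos (by norm_num) hB0
    set g : ℕ → ℝ := fun ℓ => if ℓ ≤ N' then B ^ b * r ^ (N' - ℓ) else 0 with hgdef
    have hg0 : ∀ ℓ, 0 ≤ g ℓ := by
      intro ℓ; rw [hgdef]; dsimp only; split_ifs
      · positivity
      · exact le_rfl
    have term_le : ∀ ℓ : ℕ,
        (if ((2:ℝ) ^ (ℓ:ℝ) ≤ K * ((2:ℝ) ^ (j:ℝ) + t * (2:ℝ) ^ ((j:ℝ) * (1 + α)))) ∧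
            ((2:ℝ) ^ (j:ℝ) ≤ K * ((2:ℝ) ^ (ℓ:ℝ) + t * (2:ℝ) ^ ((ℓ:ℝ) * (1 + α))))
          then (2:ℝ) ^ (-(ℓ:ℝ) * β) else 0) ≤ g ℓ := by
      intro ℓ
      split_ifs with hc
      · have hℓN : ℓ ≤ N' := by
          apply Nat.le_floor
          exact (Real.le_logb_iff_rpow_le one_lt_two hB0).mpr (hBle ℓ hc.1)
        rw [hgdef]; dsimp only; rw [if_pos hℓN]
        have key : (2:ℝ) ^ (-(ℓ:ℝ) * β) = (2:ℝ) ^ ((N':ℝ) * b) * r ^ (N' - ℓ) := by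
          rw [hrdef, ← rpow_natCast ((2:ℝ) ^ (-b)) (N' - ℓ),
            ← rpow_mul (by norm_num : (0:ℝ) ≤ 2), ← rpow_add two_pos]
          congr 1
          rw [Nat.cast_sub hℓN, hbeq]
          ring
        rw [key]
        apply mul_le_mul_of_nonneg_right _ (pow_nonneg hr0.le _)
        calc (2:ℝ) ^ ((N':ℝ) * b) = ((2:ℝ) ^ ((N':ℝ))) ^ b :=
              rpow_mul (by norm_num) _ _
          _ ≤ B ^ b := rpow_le_rpow (by positivity) hN'B hb.le
      · exact hg0 ℓ
    have hgfin : ∀ ℓ ∉ Finset.range (N' + 1), g ℓ = 0 := by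
      intro ℓ hℓ
      have hℓ' : ¬ ℓ ≤ N' := by
        intro hcon
        exact hℓ (Finset.mem_range.mpr (Nat.lt_succ_of_le hcon))
      rw [hgdef]; dsimp only; rw [if_neg hℓ']
    have hgsum : Summable g := summable_of_ne_finset_zero hgfin
    have htermsum : Summable (fun ℓ : ℕ =>
        if ((2:ℝ) ^ (ℓ:ℝ) ≤ K * ((2:ℝ) ^ (j:ℝ) + t * (2:ℝ) ^ ((j:ℝ) * (1 + α)))) ∧
           ((2:ℝ) ^ (j:ℝ) ≤ K * ((2:ℝ) ^ (ℓ:ℝ) + t * (2:ℝ) ^ ((ℓ:ℝ) * (1 + α))))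
          then (2:ℝ) ^ (-(ℓ:ℝ) * β) else 0) := by
      apply Summable.of_nonneg_of_le _ term_le hgsum
      intro ℓ; split_ifs
      · positivity
      · exact le_rfl
    have htsumg : ∑' ℓ, g ℓ ≤ B ^ b * (1 - r)⁻¹ := by
      rw [tsum_eq_sum hgfin]
      have hcongr : ∑ ℓ ∈ Finset.range (N' + 1), g ℓ
          = B ^ b * ∑ ℓ ∈ Finset.range (N' + 1), r ^ (N' - ℓ) := by
        rw [Finset.mul_sum]
        apply Finset.sum_congr rfl
        intro ℓ hℓ
        have hℓN : ℓ ≤ N' := Nat.lt_succ_iff.mp (Finset.mem_range.mp hℓ)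
        rw [hgdef]; dsimp only; rw [if_pos hℓN]
      rw [hcongr]
      have hreflect : ∑ ℓ ∈ Finset.range (N' + 1), r ^ (N' - ℓ)
          = ∑ ℓ ∈ Finset.range (N' + 1), r ^ ℓ := by
        have h := Finset.sum_range_reflect (fun k => r ^ k) (N' + 1)
        simpa using h
      rw [hreflect]
      apply mul_le_mul_of_nonneg_left _ (by positivity : (0:ℝ) ≤ B ^ b)
      have hsum_le := Summable.sum_le_tsum (Finset.range (N' + 1))
        (fun i _ => by positivity : ∀ i ∉ Finset.range (N' + 1), (0:ℝ) ≤ r ^ i)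
        (summable_geometric_of_lt_one hr0.le hr1)
      rw [tsum_geometric_of_lt_one hr0.le hr1] at hsum_le
      exact hsum_le
    refine le_trans (Summable.tsum_le_tsum term_le htermsum hgsum) (le_trans htsumg (le_of_eq ?_))
    rw [hBdef, mul_rpow (by positivity) hM0.le, mul_rpow hK0.le (by positivity),
      hKdef, ← rpow_mul (by norm_num : (0:ℝ) ≤ 2), ← rpow_mul (by norm_num : (0:ℝ) ≤ 2)]
    rw [show (j:ℝ) * b = -(j:ℝ) * β by rw [hbeq]; ring]
    ring
  · -- case β > 0, so b = β
    have hbeq : b = β := by rw [hbdef]; exact abs_of_pos hpos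
    set N : ℕ := ⌈Real.logb 2 A⁻¹⌉₊ with hNdef
    have hNA : (2:ℝ) ^ (-(N:ℝ)) ≤ A := by
      have h1 : Real.logb 2 A⁻¹ ≤ (N:ℝ) := Nat.le_ceil _
      rw [Real.logb_inv] at h1
      have h2 : -(N:ℝ) ≤ Real.logb 2 A := by linarith
      calc (2:ℝ) ^ (-(N:ℝ)) ≤ (2:ℝ) ^ (Real.logb 2 A) :=
            rpow_le_rpow_of_exponent_le one_le_two h2
        _ = A := Real.rpow_logb two_pos (by norm_num) hA0
    set g : ℕ → ℝ := fun ℓ => if N ≤ ℓ then A ^ b * r ^ (ℓ - N) else 0 with hgdef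
    have hg0 : ∀ ℓ, 0 ≤ g ℓ := by
      intro ℓ; rw [hgdef]; dsimp only; split_ifs
      · positivity
      · exact le_rfl
    have term_le : ∀ ℓ : ℕ,
        (if ((2:ℝ) ^ (ℓ:ℝ) ≤ K * ((2:ℝ) ^ (j:ℝ) + t * (2:ℝ) ^ ((j:ℝ) * (1 + α)))) ∧
            ((2:ℝ) ^ (j:ℝ) ≤ K * ((2:ℝ) ^ (ℓ:ℝ) + t * (2:ℝ) ^ ((ℓ:ℝ) * (1 + α))))
          then (2:ℝ) ^ (-(ℓ:ℝ) * β) else 0) ≤ g ℓ := by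
      intro ℓ
      split_ifs with hc
      · have hNℓ : N ≤ ℓ := by
          have h1 : (2:ℝ) ^ (-(ℓ:ℝ)) ≤ A := hAle ℓ hc.2
          have h2 : -(ℓ:ℝ) ≤ Real.logb 2 A :=
            (Real.le_logb_iff_rpow_le one_lt_two hA0).mpr h1
          apply Nat.ceil_le.mpr
          rw [Real.logb_inv]
          linarith
        rw [hgdef]; dsimp only; rw [if_pos hNℓ]
        have key : (2:ℝ) ^ (-(ℓ:ℝ) * β) = (2:ℝ) ^ (-(N:ℝ) * b) * r ^ (ℓ - N) := by
          rw [hrdef, ← rpow_natCast ((2:ℝ) ^ (-b)) (ℓ - N),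
            ← rpow_mul (by norm_num : (0:ℝ) ≤ 2), ← rpow_add two_pos]
          congr 1
          rw [Nat.cast_sub hNℓ, hbeq]
          ring
        rw [key]
        apply mul_le_mul_of_nonneg_right _ (pow_nonneg hr0.le _)
        calc (2:ℝ) ^ (-(N:ℝ) * b) = ((2:ℝ) ^ (-(N:ℝ))) ^ b := by
              rw [← rpow_mul (by norm_num : (0:ℝ) ≤ 2)]
          _ ≤ A ^ b := rpow_le_rpow (by positivity) hNA hb.le
      · exact hg0 ℓ
    have hinj : Function.Injective (fun k : ℕ => N + k) := fun a c h => by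
      simpa using h
    have hgi : ∀ k : ℕ, g (N + k) = A ^ b * r ^ k := by
      intro k
      rw [hgdef]; dsimp only
      rw [if_pos (Nat.le_add_right N k), Nat.add_sub_cancel_left]
    have hsupp0 : ∀ x ∉ Set.range (fun k : ℕ => N + k), g x = 0 := by
      intro x hx
      rw [hgdef]; dsimp only
      rw [if_neg]
      intro hNx
      exact hx ⟨x - N, by show N + (x - N) = x; omega⟩
    have hgeom : Summable (fun k : ℕ => A ^ b * r ^ k) :=
      (summable_geometric_of_lt_one hr0.le hr1).mul_left _
    have hgsum : Summable g := by
      rw [← Function.Injective.summable_iff hinj hsupp0]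
      have : (g ∘ fun k : ℕ => N + k) = fun k : ℕ => A ^ b * r ^ k := funext hgi
      rw [this]
      exact hgeom
    have htermsum : Summable (fun ℓ : ℕ =>
        if ((2:ℝ) ^ (ℓ:ℝ) ≤ K * ((2:ℝ) ^ (j:ℝ) + t * (2:ℝ) ^ ((j:ℝ) * (1 + α)))) ∧
           ((2:ℝ) ^ (j:ℝ) ≤ K * ((2:ℝ) ^ (ℓ:ℝ) + t * (2:ℝ) ^ ((ℓ:ℝ) * (1 + α))))
          then (2:ℝ) ^ (-(ℓ:ℝ) * β) else 0) := by
      apply Summable.of_nonneg_of_le _ term_le hgsum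
      intro ℓ; split_ifs
      · positivity
      · exact le_rfl
    have htsumg : ∑' ℓ, g ℓ = A ^ b * (1 - r)⁻¹ := by
      have hsupp : Function.support g ⊆ Set.range (fun k : ℕ => N + k) := by
        intro x hx
        by_contra hcon
        exact hx (hsupp0 x hcon)
      rw [← Function.Injective.tsum_eq hinj hsupp]
      calc ∑' k : ℕ, g (N + k) = ∑' k : ℕ, A ^ b * r ^ k := tsum_congr hgi
        _ = A ^ b * ∑' k : ℕ, r ^ k := tsum_mul_left
        _ = A ^ b * (1 - r)⁻¹ := by rw [tsum_geometric_of_lt_one hr0.le hr1]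
    refine le_trans (Summable.tsum_le_tsum term_le htermsum hgsum)
      (le_trans (le_of_eq htsumg) (le_of_eq ?_))
    rw [hAdef, mul_rpow (by positivity) hM0.le, mul_rpow hK0.le (by positivity),
      hKdef, ← rpow_mul (by norm_num : (0:ℝ) ≤ 2), ← rpow_mul (by norm_num : (0:ℝ) ≤ 2)]
    rw [show -(j:ℝ) * b = -(j:ℝ) * β by rw [hbeq]]
    ring
end

section
/- Let α > 0, q ∈ [1,∞], E a normed space and f : (0,∞) → E strongly measurable. Then for all pairs γ = (γ₀, γ₁) and γ' = (γ₀', γ₁') in [0,∞)² and all t > 0, ‖f(t + ·)‖_{L^q_{γ'}(E)} ≤ (min(t,1))^{−γ₀/α} · (max(t,1))^{−γ₁/α} · ‖f‖_{L^q_{γ+γ'}(E)}, where γ + γ' = (γ₀+γ₀', γ₁+γ₁'). -/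
open MeasureTheory
open scoped ENNReal

/-- The time-weighted norm `‖g‖_{L^q_γ(E)}`: the `L^q`-norm on `(0,∞)` of
`r ↦ ‖g(r)‖ (min r 1)^{γ₀/α} (max r 1)^{γ₁/α}` (with the essential-supremum
modification for `q = ∞`); the value may be `+∞`. -/
noncomputable def wnorm {E : Type*} [NormedAddCommGroup E]
    (α : ℝ) (q : ℝ≥0∞) (γ₀ γ₁ : ℝ) (g : ℝ → E) : ℝ≥0∞ :=
  eLpNorm (fun r : ℝ => ‖g r‖ * (min r 1) ^ (γ₀ / α) * (max r 1) ^ (γ₁ / α)) q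
    (volume.restrict (Set.Ioi 0))

/-- for nonnegative weight pairs `γ = (γ₀,γ₁)` and `γ' = (γ₀',γ₁')` and
every `t > 0`, `‖f(t+·)‖_{L^q_{γ'}} ≤ (min t 1)^{-γ₀/α} (max t 1)^{-γ₁/α} ‖f‖_{L^q_{γ+γ'}}`. -/
theorem stmt_14 {E : Type*} [NormedAddCommGroup E] (α : ℝ) (hα : 0 < α)
    (q : ℝ≥0∞) (hq : 1 ≤ q) (f : ℝ → E) (hf : StronglyMeasurable f)
    (γ₀ γ₁ γ₀' γ₁' : ℝ) (h₀ : 0 ≤ γ₀) (h₁ : 0 ≤ γ₁) (h₀' : 0 ≤ γ₀') (h₁' : 0 ≤ γ₁')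
    (t : ℝ) (ht : 0 < t) :
    wnorm α q γ₀' γ₁' (fun r => f (t + r)) ≤
      ENNReal.ofReal ((min t 1) ^ (-γ₀ / α) * (max t 1) ^ (-γ₁ / α)) *
        wnorm α q (γ₀ + γ₀') (γ₁ + γ₁') f := by
  set C : ℝ := (min t 1) ^ (-γ₀ / α) * (max t 1) ^ (-γ₁ / α) with hC
  have hm : (0:ℝ) < min t 1 := lt_min ht one_pos
  have hM : (0:ℝ) < max t 1 := lt_of_lt_of_le one_pos (le_max_right _ _)
  have hCpos : 0 < C := by positivity
  set G : ℝ → ℝ := fun s => ‖f s‖ * (min s 1) ^ ((γ₀ + γ₀') / α) *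
      (max s 1) ^ ((γ₁ + γ₁') / α) with hG
  have hGmeas : Measurable G := by
    have h1 : Measurable fun s : ℝ => (min s 1) ^ ((γ₀ + γ₀') / α) := by fun_prop
    have h2 : Measurable fun s : ℝ => (max s 1) ^ ((γ₁ + γ₁') / α) := by fun_prop
    exact (hf.norm.measurable.mul h1).mul h2
  -- pointwise bound on (0, ∞)
  have hpt : ∀ r ∈ Set.Ioi (0:ℝ),
      ‖f (t + r)‖ * (min r 1) ^ (γ₀' / α) * (max r 1) ^ (γ₁' / α) ≤ C * G (t + r) := by
    intro r hr
    rw [Set.mem_Ioi] at hr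
    have hr0 : (0:ℝ) < min r 1 := lt_min hr one_pos
    have hN : (0:ℝ) < min (t + r) 1 := lt_min (by linarith) one_pos
    have hP : (0:ℝ) < max (t + r) 1 := lt_of_lt_of_le one_pos (le_max_right _ _)
    have hmN : min t 1 ≤ min (t + r) 1 := min_le_min (by linarith) le_rfl
    have hMP : max t 1 ≤ max (t + r) 1 := max_le_max (by linarith) le_rfl
    have hrN : min r 1 ≤ min (t + r) 1 := min_le_min (by linarith) le_rfl
    have h1 : (min r 1) ^ (γ₀' / α) ≤ (min (t + r) 1) ^ (γ₀' / α) :=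
      Real.rpow_le_rpow hr0.le hrN (by positivity)
    have hrP : max r 1 ≤ max (t + r) 1 := max_le_max (by linarith) le_rfl
    have h2 : (max r 1) ^ (γ₁' / α) ≤ (max (t + r) 1) ^ (γ₁' / α) :=
      Real.rpow_le_rpow (by positivity) hrP (by positivity)
    have h3 : (1:ℝ) ≤ (min t 1) ^ (-γ₀ / α) * (min (t + r) 1) ^ (γ₀ / α) := by
      have : (min t 1) ^ (γ₀ / α) ≤ (min (t + r) 1) ^ (γ₀ / α) :=
        Real.rpow_le_rpow hm.le hmN (by positivity)
      rw [neg_div, Real.rpow_neg hm.le, ← div_eq_inv_mul, le_div_iff₀ (by positivity), one_mul]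
      exact this
    have h4 : (1:ℝ) ≤ (max t 1) ^ (-γ₁ / α) * (max (t + r) 1) ^ (γ₁ / α) := by
      have : (max t 1) ^ (γ₁ / α) ≤ (max (t + r) 1) ^ (γ₁ / α) :=
        Real.rpow_le_rpow hM.le hMP (by positivity)
      rw [neg_div, Real.rpow_neg hM.le, ← div_eq_inv_mul, le_div_iff₀ (by positivity), one_mul]
      exact this
    have key : ‖f (t + r)‖ * (min r 1) ^ (γ₀' / α) * (max r 1) ^ (γ₁' / α) ≤
        ((min t 1) ^ (-γ₀ / α) * (min (t + r) 1) ^ (γ₀ / α)) *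
        ((max t 1) ^ (-γ₁ / α) * (max (t + r) 1) ^ (γ₁ / α)) *
        (‖f (t + r)‖ * (min (t + r) 1) ^ (γ₀' / α) * (max (t + r) 1) ^ (γ₁' / α)) := by
      have step1 : ‖f (t + r)‖ * (min r 1) ^ (γ₀' / α) * (max r 1) ^ (γ₁' / α) ≤
          ‖f (t + r)‖ * (min (t + r) 1) ^ (γ₀' / α) * (max (t + r) 1) ^ (γ₁' / α) := by
        gcongr
      refine step1.trans ?_
      exact le_mul_of_one_le_left (by positivity) (one_le_mul_of_one_le_of_one_le h3 h4)
    refine key.trans_eq ?_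
    simp only [hG, hC]
    rw [add_div, add_div, Real.rpow_add hN, Real.rpow_add hP]
    ring
  -- rewrite wnorm of translated f
  have hmeasG' : Measurable fun r : ℝ => G (t + r) :=
    hGmeas.comp (measurable_const_add t)
  calc wnorm α q γ₀' γ₁' (fun r => f (t + r))
      ≤ eLpNorm (fun r => C * G (t + r)) q (volume.restrict (Set.Ioi 0)) := by
        refine eLpNorm_mono_ae ?_
        rw [ae_restrict_iff' measurableSet_Ioi]
        filter_upwards with r hr
        have hr' : (0:ℝ) < r := hr
        have hL : 0 ≤ ‖f (t + r)‖ * (min r 1) ^ (γ₀' / α) * (max r 1) ^ (γ₁' / α) := by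
          have : (0:ℝ) < min r 1 := lt_min hr' one_pos
          positivity
        have hR : 0 ≤ C * G (t + r) := le_trans hL (hpt r hr)
        rw [Real.norm_of_nonneg hL, Real.norm_of_nonneg hR]
        exact hpt r hr
    _ = ENNReal.ofReal C * eLpNorm (fun r => G (t + r)) q (volume.restrict (Set.Ioi 0)) := by
        rw [show (fun r => C * G (t + r)) = C • (fun r => G (t + r)) from rfl,
          eLpNorm_const_smul, Real.enorm_eq_ofReal hCpos.le]
    _ = ENNReal.ofReal C * eLpNorm G q (volume.restrict (Set.Ioi t)) := by
        congr 1
        have hmap : volume.restrict (Set.Ioi t) =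
            Measure.map (fun r : ℝ => t + r) (volume.restrict (Set.Ioi 0)) := by
          have hpre : (fun r : ℝ => t + r) ⁻¹' Set.Ioi t = Set.Ioi 0 := by
            ext x; simp [Set.mem_Ioi]
          have h1 : Measure.map (fun r : ℝ => t + r) volume = volume :=
            (measurePreserving_add_left volume t).map_eq
          have h2 := Measure.restrict_map (μ := volume)
            (measurable_const_add t) (measurableSet_Ioi (a := t))
          rw [h1, hpre] at h2
          exact h2
        rw [hmap, eLpNorm_map_measure ?_ (measurable_const_add t).aemeasurable]
        · rfl
        · rw [← hmap]
          exact hGmeas.aestronglyMeasurable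
    _ ≤ ENNReal.ofReal C * eLpNorm G q (volume.restrict (Set.Ioi 0)) := by
        gcongr
    _ = ENNReal.ofReal C * wnorm α q (γ₀ + γ₀') (γ₁ + γ₁') f := rfl
end

section
/- Let d ≥ 1 be an integer, α ∈ (0,2), u : ℝ^d → ℝ a Schwartz function, and ψ : ℝ → ℝ twice continuously differentiable with ψ'' ≥ 0 (i.e. ψ convex). Then ∫_{ℝ^d} (Lu)(v) · ψ'(u(v)) dv ≤ 0, where (Lu)(v) := (1/2) ∫_{ℝ^d} ( u(v+w) + u(v−w) − 2u(v) ) · |w|^{−d−α} dw. -/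
open MeasureTheory Metric Set

section Stmt16Aux

variable {d : ℕ}

/-- Schwartz decay in japanese-bracket form. -/
lemma stmt16_decay_one_add {F : Type*} [NormedAddCommGroup F] [NormedSpace ℝ F]
    (f : SchwartzMap (EuclideanSpace ℝ (Fin d)) F) (k : ℕ) :
    ∃ C : ℝ, 0 ≤ C ∧ ∀ x, ‖f x‖ * (1 + ‖x‖) ^ k ≤ C := by
  refine ⟨2 ^ k * ((Finset.Iic (k, 0)).sup fun m => SchwartzMap.seminorm ℝ m.1 m.2) f, by
    positivity, fun x => ?_⟩
  have := SchwartzMap.one_add_le_sup_seminorm_apply (𝕜 := ℝ) (m := (k, 0)) le_rfl le_rfl f x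
  rwa [norm_iteratedFDeriv_zero, mul_comm] at this

/-- integrability of `‖w‖ ^ s` near the origin, `s > -d`. -/
lemma stmt16_integrableOn_rpow_closedBall (hd : 1 ≤ d) {s : ℝ} (hs : -(d : ℝ) < s) :
    IntegrableOn (fun w : EuclideanSpace ℝ (Fin d) => ‖w‖ ^ s)
      (closedBall (0 : EuclideanSpace ℝ (Fin d)) 1) volume := by
  have hmeas : Measurable fun w : EuclideanSpace ℝ (Fin d) => ‖w‖ ^ s := by fun_prop
  rcases le_or_gt 0 s with hs0 | hs0
  · refine Measure.integrableOn_of_bounded (M := 1) measure_closedBall_lt_top.ne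
      hmeas.aestronglyMeasurable ?_
    filter_upwards [ae_restrict_mem measurableSet_closedBall] with w hw
    rw [Real.norm_eq_abs, abs_of_nonneg (Real.rpow_nonneg (norm_nonneg _) _)]
    exact Real.rpow_le_one (norm_nonneg _) (mem_closedBall_zero_iff.mp hw) hs0
  · have hsne : s ≠ 0 := hs0.ne
    constructor
    · exact hmeas.aestronglyMeasurable.restrict
    · rw [hasFiniteIntegral_iff_norm]
      have hnorm : ∀ w : EuclideanSpace ℝ (Fin d), ‖‖w‖ ^ s‖ = ‖w‖ ^ s := fun w =>
        by rw [Real.norm_eq_abs, abs_of_nonneg (Real.rpow_nonneg (norm_nonneg _) _)]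
      simp only [hnorm]
      rw [lintegral_eq_lintegral_meas_le _
        (Filter.Eventually.of_forall fun w => Real.rpow_nonneg (norm_nonneg _) _)
        hmeas.aemeasurable]
      set μ' := volume.restrict (closedBall (0 : EuclideanSpace ℝ (Fin d)) 1) with hμ'
      have b1 : ∀ t : ℝ, μ' {a | t ≤ ‖a‖ ^ s} ≤
          volume (closedBall (0 : EuclideanSpace ℝ (Fin d)) 1) := by
        intro t
        calc μ' {a | t ≤ ‖a‖ ^ s} ≤ μ' univ := measure_mono (subset_univ _)
        _ = _ := by rw [hμ', Measure.restrict_apply_univ]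
      have b2 : ∀ t : ℝ, 0 < t → μ' {a | t ≤ ‖a‖ ^ s} ≤
          ENNReal.ofReal (t ^ (s⁻¹ * (d : ℝ))) *
            volume (ball (0 : EuclideanSpace ℝ (Fin d)) 1) := by
        intro t ht
        have hsub : {a : EuclideanSpace ℝ (Fin d) | t ≤ ‖a‖ ^ s} ⊆
            closedBall 0 (t ^ s⁻¹) := by
          intro a ha
          simp only [mem_setOf_eq] at ha
          rcases eq_or_ne a 0 with rfl | ha0
          · simp only [mem_closedBall_zero_iff, norm_zero]
            positivity
          · have h0 : 0 < ‖a‖ := norm_pos_iff.mpr ha0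
            rw [mem_closedBall_zero_iff]
            exact (Real.le_rpow_inv_iff_of_neg h0 ht hs0).mpr ha
        calc μ' {a | t ≤ ‖a‖ ^ s} ≤ μ' (closedBall 0 (t ^ s⁻¹)) := measure_mono hsub
        _ ≤ volume (closedBall (0 : EuclideanSpace ℝ (Fin d)) (t ^ s⁻¹)) := by
            rw [hμ', Measure.restrict_apply' measurableSet_closedBall]
            exact measure_mono inter_subset_left
        _ = ENNReal.ofReal ((t ^ s⁻¹) ^ Module.finrank ℝ (EuclideanSpace ℝ (Fin d))) *
            volume (ball (0 : EuclideanSpace ℝ (Fin d)) 1) :=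
            Measure.addHaar_closedBall _ _ (Real.rpow_nonneg ht.le _)
        _ = ENNReal.ofReal (t ^ (s⁻¹ * (d : ℝ))) *
            volume (ball (0 : EuclideanSpace ℝ (Fin d)) 1) := by
            rw [finrank_euclideanSpace_fin, ← Real.rpow_natCast (t ^ s⁻¹) d,
              ← Real.rpow_mul ht.le]
      calc ∫⁻ t in Ioi (0 : ℝ), μ' {a | t ≤ ‖a‖ ^ s}
          ≤ ∫⁻ t in Ioc (0 : ℝ) 1 ∪ Ioi (1 : ℝ), μ' {a | t ≤ ‖a‖ ^ s} :=
            lintegral_mono_set Ioi_subset_Ioc_union_Ioi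
        _ ≤ (∫⁻ t in Ioc (0 : ℝ) 1, μ' {a | t ≤ ‖a‖ ^ s}) +
            ∫⁻ t in Ioi (1 : ℝ), μ' {a | t ≤ ‖a‖ ^ s} := lintegral_union_le _ _ _
        _ < ⊤ := by
            refine ENNReal.add_lt_top.2 ⟨?_, ?_⟩
            · calc ∫⁻ t in Ioc (0 : ℝ) 1, μ' {a | t ≤ ‖a‖ ^ s}
                  ≤ ∫⁻ _ in Ioc (0 : ℝ) 1,
                    volume (closedBall (0 : EuclideanSpace ℝ (Fin d)) 1) :=
                    lintegral_mono fun t => b1 t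
                _ = volume (closedBall (0 : EuclideanSpace ℝ (Fin d)) 1) * volume (Ioc (0:ℝ) 1) := by
                    rw [lintegral_const, Measure.restrict_apply_univ]
                _ < ⊤ := by
                    apply ENNReal.mul_lt_top measure_closedBall_lt_top
                    rw [Real.volume_Ioc]
                    exact ENNReal.ofReal_lt_top
            · have hexp : s⁻¹ * (d : ℝ) < -1 := by
                rw [inv_mul_eq_div, div_lt_iff_of_neg hs0]
                linarith
              calc ∫⁻ t in Ioi (1 : ℝ), μ' {a | t ≤ ‖a‖ ^ s}
                  ≤ ∫⁻ t in Ioi (1 : ℝ), ENNReal.ofReal (t ^ (s⁻¹ * (d : ℝ))) *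
                      volume (ball (0 : EuclideanSpace ℝ (Fin d)) 1) := by
                    refine setLIntegral_mono' measurableSet_Ioi fun t ht => b2 t ?_
                    exact lt_trans one_pos ht
                _ = (∫⁻ t in Ioi (1 : ℝ), ENNReal.ofReal (t ^ (s⁻¹ * (d : ℝ)))) *
                      volume (ball (0 : EuclideanSpace ℝ (Fin d)) 1) :=
                    lintegral_mul_const' _ _ measure_ball_lt_top.ne
                _ < ⊤ := by
                    refine ENNReal.mul_lt_top ?_ measure_ball_lt_top
                    exact (integrableOn_Ioi_rpow_of_lt hexp one_pos).setLIntegral_lt_top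

/-- integrability of `‖w‖ ^ s` away from the origin, `s < -d`. -/
lemma stmt16_integrableOn_rpow_compl {s : ℝ} (hs : s < -(d : ℝ)) :
    IntegrableOn (fun w : EuclideanSpace ℝ (Fin d) => ‖w‖ ^ s)
      ((closedBall (0 : EuclideanSpace ℝ (Fin d)) 1)ᶜ) volume := by
  have hmeas : Measurable fun w : EuclideanSpace ℝ (Fin d) => ‖w‖ ^ s := by fun_prop
  have hsneg : s ≤ 0 := by
    have : (0 : ℝ) ≤ d := Nat.cast_nonneg d
    linarith
  have hint : Integrable
      (fun w : EuclideanSpace ℝ (Fin d) => (2 : ℝ) ^ (-s) * (1 + ‖w‖) ^ (-(-s))) volume := by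
    refine (integrable_one_add_norm (r := -s) ?_).const_mul _
    rw [finrank_euclideanSpace_fin]
    linarith
  refine Integrable.mono' hint.integrableOn hmeas.aestronglyMeasurable.restrict ?_
  filter_upwards [ae_restrict_mem measurableSet_closedBall.compl] with w hw
  have hw1 : 1 < ‖w‖ := by
    simp only [mem_compl_iff, mem_closedBall_zero_iff, not_le] at hw
    exact hw
  have h2 : (1 + ‖w‖) / 2 ≤ ‖w‖ := by linarith
  have hposw : (0 : ℝ) < (1 + ‖w‖) / 2 := by linarith
  rw [Real.norm_eq_abs, abs_of_nonneg (Real.rpow_nonneg (norm_nonneg _) _), neg_neg]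
  calc ‖w‖ ^ s ≤ ((1 + ‖w‖) / 2) ^ s := Real.rpow_le_rpow_of_nonpos hposw h2 hsneg
    _ = (2:ℝ) ^ (-s) * (1 + ‖w‖) ^ s := by
        rw [Real.div_rpow (by linarith) (by norm_num), Real.rpow_neg (by norm_num)]
        rw [div_eq_mul_inv, mul_comm]

/-- helper: multiplying an integrable function on the right by a bounded measurable one. -/
lemma stmt16_integrable_mul_bdd {X : Type*} [MeasurableSpace X] {μ : Measure X}
    {f h : X → ℝ} (hf : Integrable f μ) (hm : AEStronglyMeasurable h μ)
    (hb : ∃ C, ∀ x, ‖h x‖ ≤ C) : Integrable (fun x => f x * h x) μ :=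
  (hf.bdd_mul (c := hb.choose) hm (Filter.Eventually.of_forall hb.choose_spec)).congr (Filter.Eventually.of_forall fun x => mul_comm _ _)

/-- Key sign lemma: for fixed `w`, `∫ (u(v+w)+u(v-w)-2u(v)) g(v) dv ≤ 0`
whenever `g` is bounded continuous and "monotone along `u`". -/
lemma stmt16_A_nonpos (u : SchwartzMap (EuclideanSpace ℝ (Fin d)) ℝ)
    (g : EuclideanSpace ℝ (Fin d) → ℝ) (hgc : Continuous g)
    (M : ℝ) (hgM : ∀ v, ‖g v‖ ≤ M)
    (hprod : ∀ a b : EuclideanSpace ℝ (Fin d), 0 ≤ (u a - u b) * (g a - g b))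
    (w : EuclideanSpace ℝ (Fin d)) :
    ∫ v : EuclideanSpace ℝ (Fin d), (u (v + w) + u (v - w) - 2 * u v) * g v ≤ 0 := by
  have hu : Integrable (⇑u) volume := u.integrable
  have hgm : AEStronglyMeasurable g volume := hgc.aestronglyMeasurable
  have hgmw : AEStronglyMeasurable (fun v : EuclideanSpace ℝ (Fin d) => g (v + w)) volume :=
    (hgc.comp (continuous_id.add continuous_const)).aestronglyMeasurable
  have hP : Integrable (fun v : EuclideanSpace ℝ (Fin d) => (u (v + w) - u v) * g v) volume :=
    stmt16_integrable_mul_bdd ((hu.comp_add_right w).sub hu) hgm ⟨M, hgM⟩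
  have hQ : Integrable (fun v : EuclideanSpace ℝ (Fin d) => (u (v - w) - u v) * g v) volume :=
    stmt16_integrable_mul_bdd ((hu.comp_sub_right w).sub hu) hgm ⟨M, hgM⟩
  have hR : Integrable (fun v : EuclideanSpace ℝ (Fin d) => (u v - u (v + w)) * g (v + w))
      volume :=
    stmt16_integrable_mul_bdd (hu.sub (hu.comp_add_right w)) hgmw ⟨M, fun v => hgM _⟩
  have hsplit : (fun v : EuclideanSpace ℝ (Fin d) => (u (v + w) + u (v - w) - 2 * u v) * g v)
      = fun v => (u (v + w) - u v) * g v + (u (v - w) - u v) * g v := by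
    funext v; ring
  rw [hsplit, integral_add hP hQ]
  have hshift : ∫ v : EuclideanSpace ℝ (Fin d), (u (v - w) - u v) * g v
      = ∫ v : EuclideanSpace ℝ (Fin d), (u v - u (v + w)) * g (v + w) := by
    have := integral_add_right_eq_self (μ := volume)
      (fun v : EuclideanSpace ℝ (Fin d) => (u (v - w) - u v) * g v) w
    rw [← this]
    congr 1
    funext v
    rw [add_sub_cancel_right]
  rw [hshift, ← integral_add hP hR]
  have hcomb : (fun v : EuclideanSpace ℝ (Fin d) =>
      (u (v + w) - u v) * g v + (u v - u (v + w)) * g (v + w))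
      = fun v => -((u (v + w) - u v) * (g (v + w) - g v)) := by
    funext v; ring
  rw [hcomb]
  refine integral_nonpos fun v => ?_
  simp only [Pi.zero_apply, neg_nonpos]
  exact hprod (v + w) v


/-- Second difference bound via the mean value theorem and Schwartz decay. -/
lemma stmt16_second_diff_bound (u : SchwartzMap (EuclideanSpace ℝ (Fin d)) ℝ) :
    ∃ C : ℝ, 0 ≤ C ∧ ∀ v w : EuclideanSpace ℝ (Fin d), ‖w‖ ≤ 1 →
      ‖u (v + w) + u (v - w) - 2 * u v‖ ≤ C * ‖w‖ ^ 2 * (1 + ‖v‖) ^ (-((d : ℝ) + 1)) := by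
  set u₁ := SchwartzMap.fderivCLM ℝ _ _ u with hu₁def
  set u₂ := SchwartzMap.fderivCLM ℝ _ _ u₁ with hu₂def
  have hu₁ : ∀ x, u₁ x = fderiv ℝ (⇑u) x := fun x => SchwartzMap.fderivCLM_apply (𝕜 := ℝ) u x
  have hu₂ : ∀ x, u₂ x = fderiv ℝ (⇑u₁) x := fun x => SchwartzMap.fderivCLM_apply (𝕜 := ℝ) u₁ x
  obtain ⟨C, hC0, hC⟩ := stmt16_decay_one_add u₂ (d + 1)
  refine ⟨C * 3 ^ (d + 1), by positivity, fun v w hw => ?_⟩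
  have hv1 : (0 : ℝ) < 1 + ‖v‖ := by positivity
  set K : ℝ := C * 3 ^ (d + 1) / (1 + ‖v‖) ^ (d + 1) with hKdef
  have hK0 : 0 ≤ K := by positivity
  have hu₂bound : ∀ y ∈ closedBall v 2, ‖u₂ y‖ ≤ K := by
    intro y hy
    have hdist : ‖v - y‖ ≤ 2 := by
      rw [← dist_eq_norm]
      exact mem_closedBall'.mp hy
    have hyv : ‖v‖ ≤ ‖y‖ + 2 := by
      have h1 := norm_sub_norm_le v y
      linarith
    have h3 : (1 + ‖v‖) ≤ 3 * (1 + ‖y‖) := by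
      have := norm_nonneg y; linarith
    have hpow : (1 + ‖v‖) ^ (d + 1) ≤ 3 ^ (d + 1) * (1 + ‖y‖) ^ (d + 1) := by
      calc (1 + ‖v‖) ^ (d + 1) ≤ (3 * (1 + ‖y‖)) ^ (d + 1) :=
            pow_le_pow_left₀ (by positivity) h3 _
        _ = 3 ^ (d + 1) * (1 + ‖y‖) ^ (d + 1) := mul_pow _ _ _
    have hmain : ‖u₂ y‖ * (1 + ‖v‖) ^ (d + 1) ≤ C * 3 ^ (d + 1) := by
      calc ‖u₂ y‖ * (1 + ‖v‖) ^ (d + 1)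
          ≤ ‖u₂ y‖ * (3 ^ (d + 1) * (1 + ‖y‖) ^ (d + 1)) :=
            mul_le_mul_of_nonneg_left hpow (norm_nonneg _)
        _ = ‖u₂ y‖ * (1 + ‖y‖) ^ (d + 1) * 3 ^ (d + 1) := by ring
        _ ≤ C * 3 ^ (d + 1) :=
            mul_le_mul_of_nonneg_right (hC y) (by positivity)
    rw [hKdef, le_div_iff₀ (by positivity)]
    exact hmain
  have hstepA : ∀ x ∈ closedBall v 1, ‖u₁ (x + w) - u₁ x‖ ≤ K * ‖w‖ := by
    intro x hx
    have hxw : x + w ∈ closedBall v 2 := by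
      rw [mem_closedBall] at hx ⊢
      have h1 : dist (x + w) x = ‖w‖ := by rw [dist_eq_norm, add_sub_cancel_left]
      calc dist (x + w) v ≤ dist (x + w) x + dist x v := dist_triangle _ _ _
        _ ≤ 1 + 1 := by rw [h1]; exact add_le_add hw hx
        _ = 2 := by norm_num
    have hx2 : x ∈ closedBall v 2 := closedBall_subset_closedBall (by norm_num) hx
    have hres := Convex.norm_image_sub_le_of_norm_fderiv_le
      (f := ⇑u₁) (s := closedBall v 2) (C := K)
      (fun y _ => u₁.differentiable.differentiableAt)
      (fun y hy => by rw [← hu₂ y]; exact hu₂bound y hy)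
      (convex_closedBall _ _) hx2 hxw
    calc ‖u₁ (x + w) - u₁ x‖ ≤ K * ‖x + w - x‖ := hres
      _ = K * ‖w‖ := by rw [add_sub_cancel_left]
  have hfd : ∀ x : EuclideanSpace ℝ (Fin d),
      HasFDerivAt (fun y : EuclideanSpace ℝ (Fin d) => u (y + w)) (u₁ (x + w)) x := by
    intro x
    have h₀ : HasFDerivAt (⇑u) (fderiv ℝ (⇑u) (x + w)) (x + w) :=
      (u.differentiable (x + w)).hasFDerivAt
    have h₁ : HasFDerivAt (fun y : EuclideanSpace ℝ (Fin d) => y + w)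
        (ContinuousLinearMap.id ℝ (EuclideanSpace ℝ (Fin d))) x :=
      (hasFDerivAt_id x).add_const w
    have h₂ := h₀.comp x h₁
    rw [hu₁]
    simpa [Function.comp_def] using h₂
  have hDdiff : ∀ x : EuclideanSpace ℝ (Fin d),
      HasFDerivAt (fun y : EuclideanSpace ℝ (Fin d) => u (y + w) - u y)
        (u₁ (x + w) - u₁ x) x := by
    intro x
    have h₀ : HasFDerivAt (⇑u) (u₁ x) x := by
      rw [hu₁]; exact (u.differentiable x).hasFDerivAt
    exact (hfd x).sub h₀
  have hvw : v - w ∈ closedBall v 1 := by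
    rw [mem_closedBall, dist_eq_norm]
    simpa using hw
  have hv : v ∈ closedBall v 1 := mem_closedBall_self (by norm_num)
  have hres2 := Convex.norm_image_sub_le_of_norm_fderiv_le
    (f := fun y : EuclideanSpace ℝ (Fin d) => u (y + w) - u y)
    (s := closedBall v 1) (C := K * ‖w‖)
    (fun x _ => (hDdiff x).differentiableAt)
    (fun x hx => by rw [(hDdiff x).fderiv]; exact hstepA x hx)
    (convex_closedBall _ _) hvw hv
  have hid : u (v + w) - u v - (u (v - w + w) - u (v - w))
      = u (v + w) + u (v - w) - 2 * u v := by
    rw [sub_add_cancel]; ring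
  have hn : ‖v - (v - w)‖ = ‖w‖ := by rw [sub_sub_cancel]
  rw [hid, hn] at hres2
  have hrw : C * 3 ^ (d + 1) * ‖w‖ ^ 2 * (1 + ‖v‖) ^ (-((d : ℝ) + 1))
      = K * ‖w‖ * ‖w‖ := by
    rw [hKdef, Real.rpow_neg hv1.le]
    have : (1 + ‖v‖) ^ ((d : ℝ) + 1) = (1 + ‖v‖) ^ (d + 1 : ℕ) := by
      rw [← Real.rpow_natCast (1 + ‖v‖) (d + 1)]
      push_cast
      ring_nf
    rw [this]
    field_simp
  rw [hrw]
  exact hres2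


set_option maxHeartbeats 1000000 in
/-- Joint integrability of the Fubini integrand. -/
lemma stmt16_joint_integrable (hd : 1 ≤ d) {α : ℝ} (hα0 : 0 < α) (hα2 : α < 2)
    (u : SchwartzMap (EuclideanSpace ℝ (Fin d)) ℝ)
    (g : EuclideanSpace ℝ (Fin d) → ℝ) (hgc : Continuous g)
    (M : ℝ) (hgM : ∀ v, ‖g v‖ ≤ M) :
    Integrable (fun p : EuclideanSpace ℝ (Fin d) × EuclideanSpace ℝ (Fin d) =>
      (u (p.1 + p.2) + u (p.1 - p.2) - 2 * u p.1) * ‖p.2‖ ^ (-(d : ℝ) - α) * g p.1)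
      (volume.prod volume) := by
  have hd1 : (1 : ℝ) ≤ (d : ℝ) := by exact_mod_cast hd
  have hM0 : 0 ≤ M := le_trans (norm_nonneg _) (hgM 0)
  have hu : Integrable (⇑u) volume := u.integrable
  have hexp_neg : -(d : ℝ) - α < 0 := by linarith
  -- measurability on the product
  have hc1 : Continuous fun p : EuclideanSpace ℝ (Fin d) × EuclideanSpace ℝ (Fin d) =>
      u (p.1 + p.2) + u (p.1 - p.2) - 2 * u p.1 :=
    ((u.continuous.comp (continuous_fst.add continuous_snd)).add
      (u.continuous.comp (continuous_fst.sub continuous_snd))).sub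
      (continuous_const.mul (u.continuous.comp continuous_fst))
  have hm2 : Measurable fun p : EuclideanSpace ℝ (Fin d) × EuclideanSpace ℝ (Fin d) =>
      ‖p.2‖ ^ (-(d : ℝ) - α) := by fun_prop
  have hFm : AEStronglyMeasurable
      (fun p : EuclideanSpace ℝ (Fin d) × EuclideanSpace ℝ (Fin d) =>
        (u (p.1 + p.2) + u (p.1 - p.2) - 2 * u p.1) * ‖p.2‖ ^ (-(d : ℝ) - α) * g p.1)
      (volume.prod volume) :=
    (hc1.aestronglyMeasurable.mul hm2.aestronglyMeasurable).mul
      ((hgc.comp continuous_fst).aestronglyMeasurable)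
  -- sections are integrable
  have hsec : ∀ w : EuclideanSpace ℝ (Fin d), Integrable
      (fun v : EuclideanSpace ℝ (Fin d) =>
        (u (v + w) + u (v - w) - 2 * u v) * ‖w‖ ^ (-(d : ℝ) - α) * g v) volume := by
    intro w
    have h1 : Integrable (fun v : EuclideanSpace ℝ (Fin d) =>
        u (v + w) + u (v - w) - 2 * u v) volume :=
      ((hu.comp_add_right w).add (hu.comp_sub_right w)).sub (hu.const_mul 2)
    exact stmt16_integrable_mul_bdd (h1.mul_const _) hgc.aestronglyMeasurable ⟨M, hgM⟩
  -- basic integrals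
  set I₀ : ℝ := ∫ v : EuclideanSpace ℝ (Fin d), ‖u v‖ with hI₀
  have hI₀0 : 0 ≤ I₀ := integral_nonneg fun v => norm_nonneg _
  have hJint : Integrable
      (fun v : EuclideanSpace ℝ (Fin d) => (1 + ‖v‖) ^ (-((d : ℝ) + 1))) volume := by
    refine integrable_one_add_norm ?_
    rw [finrank_euclideanSpace_fin]
    linarith
  set J : ℝ := ∫ v : EuclideanSpace ℝ (Fin d), (1 + ‖v‖) ^ (-((d : ℝ) + 1)) with hJ
  have hJ0 : 0 ≤ J := integral_nonneg fun v => Real.rpow_nonneg (by positivity) _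
  obtain ⟨Cd, hCd0, hCd⟩ := stmt16_second_diff_bound u
  -- the global (far) bound
  have hfar : ∀ w : EuclideanSpace ℝ (Fin d),
      (∫ v : EuclideanSpace ℝ (Fin d),
        ‖(u (v + w) + u (v - w) - 2 * u v) * ‖w‖ ^ (-(d : ℝ) - α) * g v‖)
      ≤ 4 * M * I₀ * ‖w‖ ^ (-(d : ℝ) - α) := by
    intro w
    have hKnn : 0 ≤ ‖w‖ ^ (-(d : ℝ) - α) := Real.rpow_nonneg (norm_nonneg _) _
    have hRint : Integrable (fun v : EuclideanSpace ℝ (Fin d) =>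
        (‖u (v + w)‖ + ‖u (v - w)‖ + 2 * ‖u v‖) * (‖w‖ ^ (-(d : ℝ) - α) * M)) volume :=
      (((hu.norm.comp_add_right w).add (hu.norm.comp_sub_right w)).add
        (hu.norm.const_mul 2)).mul_const _
    have hle : ∀ v : EuclideanSpace ℝ (Fin d),
        ‖(u (v + w) + u (v - w) - 2 * u v) * ‖w‖ ^ (-(d : ℝ) - α) * g v‖
        ≤ (‖u (v + w)‖ + ‖u (v - w)‖ + 2 * ‖u v‖) * (‖w‖ ^ (-(d : ℝ) - α) * M) := by
      intro v
      rw [norm_mul, norm_mul]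
      have h1 : ‖u (v + w) + u (v - w) - 2 * u v‖
          ≤ ‖u (v + w)‖ + ‖u (v - w)‖ + 2 * ‖u v‖ := by
        calc ‖u (v + w) + u (v - w) - 2 * u v‖
            ≤ ‖u (v + w) + u (v - w)‖ + ‖2 * u v‖ := norm_sub_le _ _
          _ ≤ ‖u (v + w)‖ + ‖u (v - w)‖ + 2 * ‖u v‖ := by
              have := norm_add_le (u (v + w)) (u (v - w))
              rw [norm_mul, Real.norm_two]
              linarith
      have h2 : ‖(‖w‖ ^ (-(d : ℝ) - α) : ℝ)‖ = ‖w‖ ^ (-(d : ℝ) - α) := by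
        rw [Real.norm_eq_abs, abs_of_nonneg hKnn]
      rw [h2]
      calc ‖u (v + w) + u (v - w) - 2 * u v‖ * ‖w‖ ^ (-(d : ℝ) - α) * ‖g v‖
          ≤ (‖u (v + w)‖ + ‖u (v - w)‖ + 2 * ‖u v‖) * ‖w‖ ^ (-(d : ℝ) - α) * M := by
            gcongr
            exact hgM v
        _ = (‖u (v + w)‖ + ‖u (v - w)‖ + 2 * ‖u v‖) * (‖w‖ ^ (-(d : ℝ) - α) * M) := by ring
    have hsum : (∫ v : EuclideanSpace ℝ (Fin d),
        (‖u (v + w)‖ + ‖u (v - w)‖ + 2 * ‖u v‖)) = 4 * I₀ := by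
      have ha : Integrable (fun v : EuclideanSpace ℝ (Fin d) => ‖u (v + w)‖ + ‖u (v - w)‖)
          volume := (hu.norm.comp_add_right w).add (hu.norm.comp_sub_right w)
      have hb : Integrable (fun v : EuclideanSpace ℝ (Fin d) => 2 * ‖u v‖) volume :=
        hu.norm.const_mul 2
      have hc : Integrable (fun v : EuclideanSpace ℝ (Fin d) => ‖u (v + w)‖) volume :=
        hu.norm.comp_add_right w
      have hd' : Integrable (fun v : EuclideanSpace ℝ (Fin d) => ‖u (v - w)‖) volume :=
        hu.norm.comp_sub_right w
      rw [integral_add ha hb, integral_add hc hd',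
        integral_add_right_eq_self (μ := volume) (fun v => ‖u v‖) w,
        integral_sub_right_eq_self (μ := volume) (fun v => ‖u v‖) w,
        integral_const_mul]
      rw [hI₀]; ring
    calc (∫ v : EuclideanSpace ℝ (Fin d),
          ‖(u (v + w) + u (v - w) - 2 * u v) * ‖w‖ ^ (-(d : ℝ) - α) * g v‖)
        ≤ ∫ v : EuclideanSpace ℝ (Fin d),
            (‖u (v + w)‖ + ‖u (v - w)‖ + 2 * ‖u v‖) * (‖w‖ ^ (-(d : ℝ) - α) * M) :=
          integral_mono ((hsec w).norm) hRint hle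
      _ = 4 * I₀ * (‖w‖ ^ (-(d : ℝ) - α) * M) := by rw [integral_mul_const, hsum]
      _ = 4 * M * I₀ * ‖w‖ ^ (-(d : ℝ) - α) := by ring
  -- the near bound
  have hnear : ∀ w : EuclideanSpace ℝ (Fin d), ‖w‖ ≤ 1 →
      (∫ v : EuclideanSpace ℝ (Fin d),
        ‖(u (v + w) + u (v - w) - 2 * u v) * ‖w‖ ^ (-(d : ℝ) - α) * g v‖)
      ≤ Cd * M * J * (‖w‖ ^ 2 * ‖w‖ ^ (-(d : ℝ) - α)) := by
    intro w hw
    have hKnn : 0 ≤ ‖w‖ ^ (-(d : ℝ) - α) := Real.rpow_nonneg (norm_nonneg _) _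
    have hRint : Integrable (fun v : EuclideanSpace ℝ (Fin d) =>
        Cd * ‖w‖ ^ 2 * (1 + ‖v‖) ^ (-((d : ℝ) + 1)) * (‖w‖ ^ (-(d : ℝ) - α) * M)) volume :=
      (hJint.const_mul (Cd * ‖w‖ ^ 2)).mul_const _
    have hle : ∀ v : EuclideanSpace ℝ (Fin d),
        ‖(u (v + w) + u (v - w) - 2 * u v) * ‖w‖ ^ (-(d : ℝ) - α) * g v‖
        ≤ Cd * ‖w‖ ^ 2 * (1 + ‖v‖) ^ (-((d : ℝ) + 1)) * (‖w‖ ^ (-(d : ℝ) - α) * M) := by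
      intro v
      rw [norm_mul, norm_mul]
      have h2 : ‖(‖w‖ ^ (-(d : ℝ) - α) : ℝ)‖ = ‖w‖ ^ (-(d : ℝ) - α) := by
        rw [Real.norm_eq_abs, abs_of_nonneg hKnn]
      rw [h2]
      calc ‖u (v + w) + u (v - w) - 2 * u v‖ * ‖w‖ ^ (-(d : ℝ) - α) * ‖g v‖
          ≤ (Cd * ‖w‖ ^ 2 * (1 + ‖v‖) ^ (-((d : ℝ) + 1))) * ‖w‖ ^ (-(d : ℝ) - α) * M := by
            gcongr
            · exact hCd v w hw
            · exact hgM v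
        _ = Cd * ‖w‖ ^ 2 * (1 + ‖v‖) ^ (-((d : ℝ) + 1)) * (‖w‖ ^ (-(d : ℝ) - α) * M) := by
            ring
    calc (∫ v : EuclideanSpace ℝ (Fin d),
          ‖(u (v + w) + u (v - w) - 2 * u v) * ‖w‖ ^ (-(d : ℝ) - α) * g v‖)
        ≤ ∫ v : EuclideanSpace ℝ (Fin d),
            Cd * ‖w‖ ^ 2 * (1 + ‖v‖) ^ (-((d : ℝ) + 1)) * (‖w‖ ^ (-(d : ℝ) - α) * M) :=
          integral_mono ((hsec w).norm) hRint hle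
      _ = Cd * ‖w‖ ^ 2 * J * (‖w‖ ^ (-(d : ℝ) - α) * M) := by
          rw [integral_mul_const, integral_const_mul, hJ]
      _ = Cd * M * J * (‖w‖ ^ 2 * ‖w‖ ^ (-(d : ℝ) - α)) := by ring
  -- combined bound by an integrable function
  set A : ℝ := max (4 * M * I₀) (Cd * M * J) with hA
  have hA0 : 0 ≤ A := le_trans (by positivity) (le_max_left _ _)
  have hB : ∀ w : EuclideanSpace ℝ (Fin d),
      (∫ v : EuclideanSpace ℝ (Fin d),
        ‖(u (v + w) + u (v - w) - 2 * u v) * ‖w‖ ^ (-(d : ℝ) - α) * g v‖)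
      ≤ A * min (‖w‖ ^ (2 - (d : ℝ) - α)) (‖w‖ ^ (-(d : ℝ) - α)) := by
    intro w
    have hminnn : 0 ≤ min (‖w‖ ^ (2 - (d : ℝ) - α)) (‖w‖ ^ (-(d : ℝ) - α)) :=
      le_min (Real.rpow_nonneg (norm_nonneg _) _) (Real.rpow_nonneg (norm_nonneg _) _)
    rcases eq_or_ne w 0 with rfl | hw0
    · have hz : ∀ v : EuclideanSpace ℝ (Fin d),
          ‖(u (v + 0) + u (v - 0) - 2 * u v) * ‖(0 : EuclideanSpace ℝ (Fin d))‖ ^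
            (-(d : ℝ) - α) * g v‖ = 0 := by
        intro v
        rw [norm_zero, Real.zero_rpow hexp_neg.ne, mul_zero, zero_mul, norm_zero]
      simp only [hz, integral_zero]
      positivity
    · have hwpos : 0 < ‖w‖ := norm_pos_iff.mpr hw0
      have hsq : ‖w‖ ^ 2 * ‖w‖ ^ (-(d : ℝ) - α) = ‖w‖ ^ (2 - (d : ℝ) - α) := by
        rw [← Real.rpow_natCast ‖w‖ 2, ← Real.rpow_add hwpos]
        congr 1
        push_cast
        ring
      rcases le_or_gt ‖w‖ 1 with h1 | h1
      · rw [min_eq_left (Real.rpow_le_rpow_of_exponent_ge hwpos h1 (by linarith))]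
        calc _ ≤ Cd * M * J * (‖w‖ ^ 2 * ‖w‖ ^ (-(d : ℝ) - α)) := hnear w h1
          _ = Cd * M * J * ‖w‖ ^ (2 - (d : ℝ) - α) := by rw [hsq]
          _ ≤ A * ‖w‖ ^ (2 - (d : ℝ) - α) :=
            mul_le_mul_of_nonneg_right (le_max_right _ _)
              (Real.rpow_nonneg (norm_nonneg _) _)
      · rw [min_eq_right (Real.rpow_le_rpow_of_exponent_le h1.le (by linarith))]
        exact (hfar w).trans (mul_le_mul_of_nonneg_right (le_max_left _ _)
          (Real.rpow_nonneg (norm_nonneg _) _))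
  -- the dominating function is integrable
  have hminmeas : Measurable (fun w : EuclideanSpace ℝ (Fin d) =>
      min (‖w‖ ^ (2 - (d : ℝ) - α)) (‖w‖ ^ (-(d : ℝ) - α))) := by fun_prop
  have hmin_int : Integrable (fun w : EuclideanSpace ℝ (Fin d) =>
      A * min (‖w‖ ^ (2 - (d : ℝ) - α)) (‖w‖ ^ (-(d : ℝ) - α))) volume := by
    refine Integrable.const_mul ?_ A
    rw [← integrableOn_univ, ← union_compl_self (closedBall (0 : EuclideanSpace ℝ (Fin d)) 1)]
    refine IntegrableOn.union ?_ ?_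
    · refine Integrable.mono' (stmt16_integrableOn_rpow_closedBall hd
        (s := 2 - (d : ℝ) - α) (by linarith)) hminmeas.aestronglyMeasurable.restrict
        (ae_of_all _ fun w => ?_)
      rw [Real.norm_eq_abs, abs_of_nonneg (le_min (Real.rpow_nonneg (norm_nonneg _) _)
        (Real.rpow_nonneg (norm_nonneg _) _))]
      exact min_le_left _ _
    · refine Integrable.mono' (stmt16_integrableOn_rpow_compl
        (s := -(d : ℝ) - α) (by linarith)) hminmeas.aestronglyMeasurable.restrict
        (ae_of_all _ fun w => ?_)
      rw [Real.norm_eq_abs, abs_of_nonneg (le_min (Real.rpow_nonneg (norm_nonneg _) _)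
        (Real.rpow_nonneg (norm_nonneg _) _))]
      exact min_le_right _ _
  -- conclude with the Fubini criterion
  have hc1' : Continuous fun q : EuclideanSpace ℝ (Fin d) × EuclideanSpace ℝ (Fin d) =>
      u (q.2 + q.1) + u (q.2 - q.1) - 2 * u q.2 :=
    ((u.continuous.comp (continuous_snd.add continuous_fst)).add
      (u.continuous.comp (continuous_snd.sub continuous_fst))).sub
      (continuous_const.mul (u.continuous.comp continuous_snd))
  have hm2' : Measurable fun q : EuclideanSpace ℝ (Fin d) × EuclideanSpace ℝ (Fin d) =>
      ‖q.1‖ ^ (-(d : ℝ) - α) := by fun_prop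
  have hswapm : AEStronglyMeasurable
      (fun q : EuclideanSpace ℝ (Fin d) × EuclideanSpace ℝ (Fin d) =>
        ‖(u (q.2 + q.1) + u (q.2 - q.1) - 2 * u q.2) * ‖q.1‖ ^ (-(d : ℝ) - α) * g q.2‖)
      (volume.prod volume) :=
    ((hc1'.aestronglyMeasurable.mul hm2'.aestronglyMeasurable).mul
      ((hgc.comp continuous_snd).aestronglyMeasurable)).norm
  have hBm : AEStronglyMeasurable (fun w : EuclideanSpace ℝ (Fin d) =>
      ∫ v : EuclideanSpace ℝ (Fin d),
        ‖(u (v + w) + u (v - w) - 2 * u v) * ‖w‖ ^ (-(d : ℝ) - α) * g v‖) volume :=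
    hswapm.integral_prod_right'
  have hfinal : Integrable (fun w : EuclideanSpace ℝ (Fin d) =>
      ∫ v : EuclideanSpace ℝ (Fin d),
        ‖(u (v + w) + u (v - w) - 2 * u v) * ‖w‖ ^ (-(d : ℝ) - α) * g v‖) volume := by
    refine hmin_int.mono' hBm (ae_of_all _ fun w => ?_)
    rw [Real.norm_eq_abs, abs_of_nonneg (integral_nonneg fun v => norm_nonneg _)]
    exact hB w
  exact (integrable_prod_iff' hFm).mpr ⟨ae_of_all _ hsec, hfinal⟩

end Stmt16Aux

/-- for a Schwartz function `u` on `ℝ^d`, `α ∈ (0,2)` and a convex `C²`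
function `ψ : ℝ → ℝ`, one has `∫ (Lu)(v) ψ'(u(v)) dv ≤ 0`, where
`(Lu)(v) = (1/2) ∫ (u(v+w) + u(v-w) - 2u(v)) |w|^{-d-α} dw` is the fractional
Laplacian up to a positive normalizing constant. -/
theorem stmt_16 (d : ℕ) (hd : 1 ≤ d) (α : ℝ) (hα : α ∈ Set.Ioo (0 : ℝ) 2)
    (u : SchwartzMap (EuclideanSpace ℝ (Fin d)) ℝ) (ψ : ℝ → ℝ)
    (hψ : ContDiff ℝ 2 ψ) (hconv : ∀ x : ℝ, 0 ≤ deriv (deriv ψ) x) :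
    (∫ v : EuclideanSpace ℝ (Fin d),
      ((1 : ℝ) / 2 * ∫ w : EuclideanSpace ℝ (Fin d),
        (u (v + w) + u (v - w) - 2 * u v) * ‖w‖ ^ (-(d : ℝ) - α)) * deriv ψ (u v)) ≤ 0 := by
  obtain ⟨hα0, hα2⟩ := hα
  -- facts about ψ
  have h2 : ContDiff ℝ ((1 : WithTop ℕ∞) + 1) ψ := by
    have : ((1 : WithTop ℕ∞) + 1) = 2 := by norm_num
    rw [this]; exact hψ
  have hD := contDiff_succ_iff_deriv.mp h2
  have hdψcont : ContDiff ℝ 1 (deriv ψ) := hD.2.2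
  have hdψdiff : Differentiable ℝ (deriv ψ) := hdψcont.differentiable one_ne_zero
  have hmono : Monotone (deriv ψ) := monotone_of_deriv_nonneg hdψdiff hconv
  have hgc : Continuous fun v : EuclideanSpace ℝ (Fin d) => deriv ψ (u v) :=
    hdψcont.continuous.comp u.continuous
  -- bound on g
  obtain ⟨Cu, hCu0, hCu⟩ := stmt16_decay_one_add u 0
  have hCu' : ∀ x, |u x| ≤ Cu := fun x => by
    have := hCu x
    simpa [Real.norm_eq_abs] using this
  obtain ⟨M0, hM0⟩ := (isCompact_Icc (a := -Cu) (b := Cu)).exists_bound_of_continuousOn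
    hdψcont.continuous.continuousOn
  set M : ℝ := max M0 0 with hM
  have hgM : ∀ v : EuclideanSpace ℝ (Fin d), ‖deriv ψ (u v)‖ ≤ M := by
    intro v
    have hmem : u v ∈ Icc (-Cu) Cu := by
      have := abs_le.mp (hCu' v)
      exact ⟨this.1, this.2⟩
    exact le_trans (hM0 (u v) hmem) (le_max_left _ _)
  have hprod : ∀ a b : EuclideanSpace ℝ (Fin d),
      0 ≤ (u a - u b) * (deriv ψ (u a) - deriv ψ (u b)) := by
    intro a b
    rcases le_total (u a) (u b) with h | h
    · have h' := hmono h
      nlinarith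
    · have h' := hmono h
      nlinarith
  -- Fubini
  have hF := stmt16_joint_integrable hd hα0 hα2 u _ hgc M hgM
  have hswap := MeasureTheory.integral_integral_swap (μ := volume) (ν := volume)
    (f := fun v w : EuclideanSpace ℝ (Fin d) =>
      (u (v + w) + u (v - w) - 2 * u v) * ‖w‖ ^ (-(d : ℝ) - α) * deriv ψ (u v)) hF
  have hmain : (∫ v : EuclideanSpace ℝ (Fin d),
      (∫ w : EuclideanSpace ℝ (Fin d),
        (u (v + w) + u (v - w) - 2 * u v) * ‖w‖ ^ (-(d : ℝ) - α)) * deriv ψ (u v)) ≤ 0 := by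
    have e1 : (fun v : EuclideanSpace ℝ (Fin d) =>
        (∫ w : EuclideanSpace ℝ (Fin d),
          (u (v + w) + u (v - w) - 2 * u v) * ‖w‖ ^ (-(d : ℝ) - α)) * deriv ψ (u v))
        = fun v : EuclideanSpace ℝ (Fin d) => ∫ w : EuclideanSpace ℝ (Fin d),
          (u (v + w) + u (v - w) - 2 * u v) * ‖w‖ ^ (-(d : ℝ) - α) * deriv ψ (u v) :=
      funext fun v => (integral_mul_const _ _).symm
    rw [e1, hswap]
    refine integral_nonpos fun w => ?_
    have e2 : (fun v : EuclideanSpace ℝ (Fin d) =>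
        (u (v + w) + u (v - w) - 2 * u v) * ‖w‖ ^ (-(d : ℝ) - α) * deriv ψ (u v))
        = fun v : EuclideanSpace ℝ (Fin d) =>
          (u (v + w) + u (v - w) - 2 * u v) * deriv ψ (u v) * ‖w‖ ^ (-(d : ℝ) - α) :=
      funext fun v => by ring
    show (∫ v : EuclideanSpace ℝ (Fin d),
        (u (v + w) + u (v - w) - 2 * u v) * ‖w‖ ^ (-(d : ℝ) - α) * deriv ψ (u v)) ≤ 0
    rw [e2, integral_mul_const]
    exact mul_nonpos_iff.mpr (Or.inr ⟨stmt16_A_nonpos u _ hgc M hgM hprod w,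
      Real.rpow_nonneg (norm_nonneg _) _⟩)
  have e0 : (fun v : EuclideanSpace ℝ (Fin d) =>
      ((1 : ℝ) / 2 * ∫ w : EuclideanSpace ℝ (Fin d),
        (u (v + w) + u (v - w) - 2 * u v) * ‖w‖ ^ (-(d : ℝ) - α)) * deriv ψ (u v))
      = fun v : EuclideanSpace ℝ (Fin d) =>
        (1 : ℝ) / 2 * ((∫ w : EuclideanSpace ℝ (Fin d),
          (u (v + w) + u (v - w) - 2 * u v) * ‖w‖ ^ (-(d : ℝ) - α)) * deriv ψ (u v)) :=
    funext fun v => by ring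
  rw [e0, integral_const_mul]
  linarith
end
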